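/- arXiv:1009.4364 — 3 statements merged into one kernel-verified Lean document; each statement's English description precedes it below -/
import Mathlib

section
/- Let G = (ℤ/2ℤ) wr ℤ² with generating set {a, b, c}, where a generates the passive group ℤ/2ℤ (supported at the identity of ℤ²) and b, c are the standard generators of the active group ℤ². Then the subgroup H = ⟨b, c, [a,b]⟩ satisfies Δ_H^G(l) ⪰ l²; in particular, G = (ℤ/2ℤ) wr ℤ² contains a distorted finitely generated subgroup. -/
open scoped Pointwise
open scoped commutatorElement

namespace DistortionPaper

section Defs

variable (A B : Type*) [Group A] [Group B]

/-- The base group of the restricted wreath product: finitely supported functions `B → A`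
under pointwise multiplication, as a subgroup of `B → A`. -/
def WreathBase : Subgroup (B → A) where
  carrier := {f | (Function.mulSupport f).Finite}
  one_mem' := by
    simp [Function.mulSupport_one]
  mul_mem' := by
    intro f g hf hg
    exact ((Set.Finite.union hf hg).subset (Function.mulSupport_mul f g))
  inv_mem' := by
    intro f hf
    simpa [Function.mulSupport_inv] using hf

/-- The shift automorphism of the base group: `(g ∘ f)(x) = f(x * g)`. -/
def wreathShift (g : B) : WreathBase A B ≃* WreathBase A B where
  toFun f := ⟨fun x => (f : B → A) (x * g), by
    have h : Function.mulSupport (fun x => (f : B → A) (x * g))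
        ⊆ (fun x : B => x * g) ⁻¹' Function.mulSupport (f : B → A) := fun x hx => hx
    exact (Set.Finite.preimage (Set.injOn_of_injective (mul_left_injective g)) f.2).subset h⟩
  invFun f := ⟨fun x => (f : B → A) (x * g⁻¹), by
    have h : Function.mulSupport (fun x => (f : B → A) (x * g⁻¹))
        ⊆ (fun x : B => x * g⁻¹) ⁻¹' Function.mulSupport (f : B → A) := fun x hx => hx
    exact (Set.Finite.preimage (Set.injOn_of_injective (mul_left_injective g⁻¹)) f.2).subset h⟩
  left_inv f := Subtype.ext <| funext fun x => by simp [mul_assoc]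
  right_inv f := Subtype.ext <| funext fun x => by simp [mul_assoc]
  map_mul' f₁ f₂ := Subtype.ext <| funext fun _ => rfl

/-- The action of `B` on the base group by shifts. -/
def wreathAction : B →* MulAut (WreathBase A B) where
  toFun g := wreathShift A B g
  map_one' := by
    refine MulEquiv.ext fun f => Subtype.ext <| funext fun x => ?_
    show (f : B → A) (x * 1) = (f : B → A) x
    rw [mul_one]
  map_mul' g₁ g₂ := by
    refine MulEquiv.ext fun f => Subtype.ext <| funext fun x => ?_
    show (f : B → A) (x * (g₁ * g₂)) = (f : B → A) (x * g₁ * g₂)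
    rw [mul_assoc]

/-- The restricted wreath product `A wr B`. -/
abbrev WreathProduct := WreathBase A B ⋊[wreathAction A B] B

/-- The element of the base group supported at `1 ∈ B` with value `a`. -/
noncomputable def toBase (a : A) : WreathBase A B := by
  classical
  exact ⟨fun x => if x = (1 : B) then a else 1, by
    apply Set.Finite.subset (Set.finite_singleton (1 : B))
    intro x hx
    simp only [Function.mem_mulSupport] at hx
    simp only [Set.mem_singleton_iff]
    by_contra hne
    rw [if_neg hne] at hx
    exact hx rfl⟩

/-- The canonical copy of `A` in `A wr B` (functions supported at `1`). -/
noncomputable def ofPassive (a : A) : WreathProduct A B :=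
  SemidirectProduct.inl (toBase A B a)

/-- The canonical copy of `B` in `A wr B`. -/
def ofActive (g : B) : WreathProduct A B := SemidirectProduct.inr g

/-- The generating set `S ∪ T` of `A wr B` obtained from generating sets `S` of `A`
and `T` of `B`. -/
def wreathGen (S : Set A) (T : Set B) : Set (WreathProduct A B) :=
  (fun a => ofPassive A B a) '' S ∪ (fun g => ofActive A B g) '' T

end Defs

/-- Word length of `g` with respect to the set `T`: the least `n` such that `g` is a
product of `n` elements of `T ∪ T⁻¹` (and `0` if no such `n` exists). -/
noncomputable def wordLength {G : Type*} [Group G] (T : Set G) (g : G) : ℕ :=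
  sInf {n | ∃ f : Fin n → G, (∀ i, f i ∈ T ∪ T⁻¹) ∧ (List.ofFn f).prod = g}

/-- The distortion function of a subgroup `H` of `G`, where `T` is a generating set of `G`
and `S` a generating set of `H`. -/
noncomputable def distortion {G : Type*} [Group G] (T : Set G) (H : Subgroup G)
    (S : Set H) (l : ℕ) : ℕ :=
  sSup (wordLength S '' {h : H | wordLength T (h : G) ≤ l})

/-- `f ⪯ g` : there is `C > 0` with `f l ≤ C * g (C * l)` for all `l`. -/
def Dominates (f g : ℕ → ℕ) : Prop := ∃ C : ℕ, 0 < C ∧ ∀ l, f l ≤ C * g (C * l)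

/-- `f ≈ g` : `f ⪯ g` and `g ⪯ f`. -/
def DistEquiv (f g : ℕ → ℕ) : Prop := Dominates f g ∧ Dominates g f

/-- A subgroup is subnormal if there is a finite chain from it to the whole group,
each term normal in the next. -/
def IsSubnormal {G : Type*} [Group G] (H : Subgroup G) : Prop :=
  ∃ (n : ℕ) (c : ℕ → Subgroup G), c 0 = H ∧ c n = ⊤ ∧
    ∀ i < n, c i ≤ c (i + 1) ∧ ∀ x ∈ c (i + 1), ∀ h ∈ c i, x * h * x⁻¹ ∈ c i

/-- `ℤ` as a multiplicative group. -/
abbrev Mℤ := Multiplicative ℤ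

/-- The wreath product `ℤ wr ℤ`. -/
abbrev ZwrZ := WreathProduct Mℤ Mℤ

/-- The standard generator `a` of `ℤ wr ℤ` (passive copy, supported at `1`). -/
noncomputable def aZ : ZwrZ := ofPassive Mℤ Mℤ (Multiplicative.ofAdd 1)

/-- The standard generator `b` of `ℤ wr ℤ` (active copy). -/
def bZ : ZwrZ := ofActive Mℤ Mℤ (Multiplicative.ofAdd 1)


/-- The wreath product `(ℤ/2ℤ) wr ℤ²`. -/
abbrev Z2wrZ2 := WreathProduct (Multiplicative (ZMod 2)) (Multiplicative (ℤ × ℤ))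

/-- The generator `a` of the passive group `ℤ/2ℤ`. -/
noncomputable def a6 : Z2wrZ2 := ofPassive _ _ (Multiplicative.ofAdd (1 : ZMod 2))

/-- The first standard generator `b` of the active group `ℤ²`. -/
def b6 : Z2wrZ2 := ofActive _ _ (Multiplicative.ofAdd ((1, 0) : ℤ × ℤ))

/-- The second standard generator `c` of the active group `ℤ²`. -/
def c6 : Z2wrZ2 := ofActive _ _ (Multiplicative.ofAdd ((0, 1) : ℤ × ℤ))

section Statement6Proof

open Function Multiplicative

/-! ### Coordinates on `Z2wrZ2` -/

/-- The base ("lamp configuration") of an element, as an additive function. -/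
noncomputable def bse (g : Z2wrZ2) : ℤ × ℤ → ZMod 2 := fun v =>
  toAdd ((g.left : Multiplicative (ℤ × ℤ) → Multiplicative (ZMod 2)) (ofAdd v))

/-- The active ("position") part of an element, additively. -/
def act (g : Z2wrZ2) : ℤ × ℤ := toAdd g.right

lemma bse_mul (g h : Z2wrZ2) (v : ℤ × ℤ) :
    bse (g * h) v = bse g v + bse h (v + act g) := rfl

lemma act_mul (g h : Z2wrZ2) : act (g * h) = act g + act h := rfl

lemma bse_one (v : ℤ × ℤ) : bse (1 : Z2wrZ2) v = 0 := rfl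

lemma act_one : act (1 : Z2wrZ2) = 0 := rfl

lemma bse_inv (g : Z2wrZ2) (v : ℤ × ℤ) :
    bse g⁻¹ v = bse g (v + -act g) := by
  have h : bse g⁻¹ v = -(bse g (v + -act g)) := rfl
  rw [h, CharTwo.neg_eq]

lemma act_inv (g : Z2wrZ2) : act g⁻¹ = -act g := rfl

lemma bse_support_finite (g : Z2wrZ2) : (support (bse g)).Finite := by
  have h2 := g.left.2
  have hs : support (bse g) ⊆ ⇑(ofAdd (α := ℤ × ℤ)) ⁻¹'
      (mulSupport ((g.left : Multiplicative (ℤ × ℤ) → Multiplicative (ZMod 2)))) := by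
    intro v hv
    simp only [Set.mem_preimage, mem_mulSupport]
    intro hc
    apply hv
    simp only [bse, hc]
    rfl
  exact ((h2.preimage (Set.injOn_of_injective (fun x y hxy => by
    simpa using congrArg toAdd hxy)))).subset hs

/-- Extensionality via coordinates. -/
lemma ext_bse_act {g h : Z2wrZ2} (h1 : bse g = bse h) (h2 : act g = act h) : g = h := by
  cases g with | mk gl gr =>
  cases h with | mk hl hr =>
  have hr' : gr = hr := h2
  subst hr'
  congr 1
  apply Subtype.ext
  funext x
  have := congrFun h1 (toAdd x)
  simpa [bse] using this

/-! ### The prefix-sum norm -/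

/-- Row-wise prefix sums. -/
noncomputable def PS (φ : ℤ × ℤ → ZMod 2) (v : ℤ × ℤ) : ZMod 2 :=
  ∑ᶠ x : ℤ, if x ≤ v.1 then φ (x, v.2) else 0

lemma slice_support_finite {φ : ℤ × ℤ → ZMod 2} (hφ : (support φ).Finite) (x₀ y : ℤ) :
    (support fun x => if x ≤ x₀ then φ (x, y) else 0).Finite := by
  have hs : (support fun x => if x ≤ x₀ then φ (x, y) else 0) ⊆
      (fun x : ℤ => (x, y)) ⁻¹' support φ := by
    intro x hx
    simp only [mem_support] at hx
    by_cases h : x ≤ x₀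
    · rw [if_pos h] at hx; exact hx
    · exact absurd (if_neg h) hx
  exact (hφ.preimage (Set.injOn_of_injective (fun a b hab => (Prod.mk.injEq _ _ _ _ ▸ hab).1))).subset hs

lemma PS_add (φ ψ : ℤ × ℤ → ZMod 2) (hφ : (support φ).Finite) (hψ : (support ψ).Finite)
    (v : ℤ × ℤ) : PS (fun u => φ u + ψ u) v = PS φ v + PS ψ v := by
  unfold PS
  rw [← finsum_add_distrib (slice_support_finite hφ v.1 v.2) (slice_support_finite hψ v.1 v.2)]
  congr 1
  funext x
  by_cases h : x ≤ v.1 <;> simp [h]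

lemma PS_shift (φ : ℤ × ℤ → ZMod 2) (w v : ℤ × ℤ) :
    PS (fun u => φ (u + w)) v = PS φ (v + w) := by
  unfold PS
  have h2 : (v + w).1 = v.1 + w.1 := rfl
  have h3 : (v + w).2 = v.2 + w.2 := rfl
  rw [h2, h3, ← finsum_comp_equiv (Equiv.addRight w.1)
    (f := fun x : ℤ => if x ≤ v.1 + w.1 then φ (x, v.2 + w.2) else 0)]
  congr 1
  funext x
  simp only [Equiv.coe_addRight]
  by_cases h : x ≤ v.1
  · rw [if_pos h]
    exact (if_pos (show x + w.1 ≤ v.1 + w.1 by omega)).symm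
  · rw [if_neg h]
    exact (if_neg (show ¬ x + w.1 ≤ v.1 + w.1 by omega)).symm

lemma point_support_finite (w : ℤ × ℤ) (c : ZMod 2) :
    (support fun u : ℤ × ℤ => if u = w then c else 0).Finite := by
  apply (Set.finite_singleton w).subset
  intro u hu
  simp only [mem_support] at hu
  by_cases h : u = w
  · simpa using h
  · exact absurd (if_neg h) hu

lemma PS_point (w : ℤ × ℤ) (c : ZMod 2) (v : ℤ × ℤ) :
    PS (fun u => if u = w then c else 0) v = if v.2 = w.2 ∧ w.1 ≤ v.1 then c else 0 := by
  unfold PS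
  have hfun : (fun x : ℤ => if x ≤ v.1 then (fun u : ℤ × ℤ => if u = w then c else 0) (x, v.2) else 0)
      = fun x => if x = w.1 then (if v.2 = w.2 ∧ w.1 ≤ v.1 then c else 0) else 0 := by
    funext x
    by_cases hx : x = w.1 <;> by_cases h2 : v.2 = w.2 <;> by_cases h1 : w.1 ≤ v.1 <;>
      simp [hx, h1, h2, Prod.ext_iff]
  rw [hfun, finsum_eq_single _ w.1 (fun x hx => if_neg hx), if_pos rfl]

lemma PS_zero (v : ℤ × ℤ) : PS (fun _ => 0) v = 0 := by
  unfold PS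
  apply finsum_eq_zero_of_forall_eq_zero
  intro x
  split <;> rfl

/-- The set of nonzero prefix sums. -/
def spt (g : Z2wrZ2) : Set (ℤ × ℤ) := {v | PS (bse g) v ≠ 0}

/-- Elements whose prefix-sum set is finite. -/
def GoodEl (g : Z2wrZ2) : Prop := (spt g).Finite

/-- The norm: area of the prefix-sum set plus the length of the active part. -/
noncomputable def nu (g : Z2wrZ2) : ℕ := (spt g).ncard + ((act g).1.natAbs + (act g).2.natAbs)

lemma PS_bse_mul (g h : Z2wrZ2) (v : ℤ × ℤ) :
    PS (bse (g * h)) v = PS (bse g) v + PS (bse h) (v + act g) := by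
  have h1 : bse (g * h) = fun u => bse g u + (fun u' => bse h (u' + act g)) u :=
    funext (bse_mul g h)
  have hfin : (support fun u : ℤ × ℤ => bse h (u + act g)).Finite := by
    have : (support fun u : ℤ × ℤ => bse h (u + act g)) ⊆
        (fun u : ℤ × ℤ => u + act g) ⁻¹' support (bse h) := fun u hu => hu
    exact ((bse_support_finite h).preimage
      (Set.injOn_of_injective (add_left_injective (act g)))).subset this
  rw [h1, PS_add _ _ (bse_support_finite g) hfin, PS_shift]

lemma spt_mul_subset (g h : Z2wrZ2) :
    spt (g * h) ⊆ spt g ∪ (fun u => u + -act g) '' spt h := by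
  intro v hv
  simp only [spt, Set.mem_setOf_eq] at hv
  rw [PS_bse_mul] at hv
  by_cases h1 : PS (bse g) v = 0
  · right
    refine ⟨v + act g, ?_, add_neg_cancel_right v (act g)⟩
    intro hc
    rw [h1, hc] at hv
    exact hv (add_zero 0)
  · exact Or.inl h1

lemma ncard_shift_image (S : Set (ℤ × ℤ)) (w : ℤ × ℤ) :
    ((fun u => u + w) '' S).ncard = S.ncard :=
  Set.ncard_image_of_injective S (add_left_injective w)

lemma good_mul {g h : Z2wrZ2} (hg : GoodEl g) (hh : GoodEl h) : GoodEl (g * h) :=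
  (hg.union (hh.image _)).subset (spt_mul_subset g h)

lemma nu_mul_le {g h : Z2wrZ2} (hg : GoodEl g) (hh : GoodEl h) :
    nu (g * h) ≤ nu g + nu h := by
  have h1 : (spt (g * h)).ncard ≤ (spt g).ncard + (spt h).ncard := by
    calc (spt (g * h)).ncard ≤ (spt g ∪ (fun u => u + -act g) '' spt h).ncard :=
          Set.ncard_le_ncard (spt_mul_subset g h) (hg.union (hh.image _))
      _ ≤ (spt g).ncard + ((fun u => u + -act g) '' spt h).ncard := Set.ncard_union_le _ _
      _ = (spt g).ncard + (spt h).ncard := by rw [ncard_shift_image]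
  have h2 := Int.natAbs_add_le (act g).1 (act h).1
  have h3 := Int.natAbs_add_le (act g).2 (act h).2
  have h4 : act (g * h) = act g + act h := act_mul g h
  simp only [nu, h4, Prod.fst_add, Prod.snd_add]
  omega

lemma spt_inv (g : Z2wrZ2) : spt g⁻¹ = (fun u => u + act g) '' spt g := by
  have h1 : ∀ v, PS (bse g⁻¹) v = PS (bse g) (v + -act g) := by
    intro v
    have : bse g⁻¹ = fun u => bse g (u + -act g) := funext (bse_inv g)
    rw [this, PS_shift]
  ext v
  simp only [spt, Set.mem_setOf_eq, h1, Set.mem_image]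
  constructor
  · intro hv
    exact ⟨v + -act g, hv, neg_add_cancel_right v (act g)⟩
  · rintro ⟨u, hu, rfl⟩
    simpa using hu

lemma nu_inv (g : Z2wrZ2) : nu g⁻¹ = nu g := by
  simp only [nu, spt_inv, ncard_shift_image, act_inv, Prod.fst_neg, Prod.snd_neg,
    Int.natAbs_neg]

lemma good_inv {g : Z2wrZ2} (hg : GoodEl g) : GoodEl g⁻¹ := by
  unfold GoodEl
  rw [spt_inv]
  exact hg.image _

lemma spt_one : spt (1 : Z2wrZ2) = ∅ := by
  ext v
  simp only [spt, Set.mem_setOf_eq, Set.mem_empty_iff_false, iff_false, not_not]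
  have : bse (1 : Z2wrZ2) = fun _ => 0 := funext bse_one
  rw [this, PS_zero]

lemma good_one : GoodEl (1 : Z2wrZ2) := by
  unfold GoodEl; rw [spt_one]; exact Set.finite_empty

lemma nu_one : nu (1 : Z2wrZ2) = 0 := by
  simp [nu, spt_one, act_one]


/-! ### Generators and explicit elements -/

lemma toBase_val_one {A B : Type*} [Group A] [Group B] (a : A) :
    ((toBase A B a : WreathBase A B) : B → A) 1 = a := by
  unfold toBase
  simp

lemma toBase_val_ne {A B : Type*} [Group A] [Group B] (a : A) {x : B} (hx : x ≠ 1) :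
    ((toBase A B a : WreathBase A B) : B → A) x = 1 := by
  unfold toBase
  simp [hx]

lemma bse_a6 (v : ℤ × ℤ) : bse a6 v = if v = 0 then 1 else 0 := by
  have hkey : ∀ u : ℤ × ℤ, bse a6 u = toAdd
      (((toBase (Multiplicative (ZMod 2)) (Multiplicative (ℤ × ℤ)) (ofAdd (1 : ZMod 2)) :
        WreathBase _ _) : Multiplicative (ℤ × ℤ) → Multiplicative (ZMod 2)) (ofAdd u)) :=
    fun u => rfl
  by_cases h : v = 0
  · rw [if_pos h]
    subst h
    rw [hkey, ofAdd_zero, toBase_val_one]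
    rfl
  · rw [if_neg h]
    rw [hkey, toBase_val_ne _ (by simpa using h)]
    rfl

lemma act_a6 : act a6 = 0 := rfl

lemma bse_b6 (v : ℤ × ℤ) : bse b6 v = 0 := rfl

lemma act_b6 : act b6 = ((1 : ℤ), (0 : ℤ)) := rfl

lemma bse_c6 (v : ℤ × ℤ) : bse c6 v = 0 := rfl

lemma act_c6 : act c6 = ((0 : ℤ), (1 : ℤ)) := rfl

lemma act_t : act ⁅a6, b6⁆ = 0 := by
  rw [commutatorElement_def]
  simp only [act_mul, act_inv, act_a6, act_b6]
  simp

lemma bse_t (v : ℤ × ℤ) : bse ⁅a6, b6⁆ v =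
    (if v = ((0 : ℤ), (0 : ℤ)) then 1 else 0) + (if v = ((-1 : ℤ), (0 : ℤ)) then 1 else 0) := by
  rw [commutatorElement_def]
  simp only [bse_mul, bse_inv, act_mul, act_inv, bse_a6, bse_b6, bse_c6, act_a6, act_b6]
  obtain ⟨x, y⟩ := v
  simp only [Prod.mk_add_mk, Prod.mk.injEq, add_zero, zero_add, neg_zero, Prod.neg_mk,
    Prod.mk_eq_zero]
  norm_num
  split_ifs <;> first | rfl | decide | omega | (exfalso; omega)

/-! ### Powers -/

lemma act_pow (g : Z2wrZ2) (m : ℕ) : act (g ^ m) = m • act g := by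
  induction m with
  | zero => rw [pow_zero, act_one, zero_smul]
  | succ k ih => rw [pow_succ, act_mul, ih, succ_nsmul]

lemma smul_pair (k : ℕ) (a b : ℤ) : k • ((a, b) : ℤ × ℤ) = (k * a, k * b) := by
  rw [Prod.smul_mk]
  simp [nsmul_eq_mul]

lemma bse_pow_eq_zero {g : Z2wrZ2} (hg : ∀ v, bse g v = 0) (m : ℕ) (v : ℤ × ℤ) :
    bse (g ^ m) v = 0 := by
  induction m generalizing v with
  | zero => rw [pow_zero]; exact bse_one v
  | succ k ih => rw [pow_succ, bse_mul, ih, hg, add_zero]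

lemma bse_ac (v : ℤ × ℤ) : bse (a6 * c6) v = if v = 0 then 1 else 0 := by
  rw [bse_mul, bse_c6, add_zero, bse_a6]

lemma act_ac : act (a6 * c6) = ((0 : ℤ), (1 : ℤ)) := rfl

lemma bse_ac_pow (m : ℕ) (v : ℤ × ℤ) :
    bse ((a6 * c6) ^ m) v = if v.1 = 0 ∧ 1 - (m : ℤ) ≤ v.2 ∧ v.2 ≤ 0 then 1 else 0 := by
  induction m generalizing v with
  | zero =>
    rw [pow_zero, bse_one, if_neg (by push_cast; omega)]
  | succ k ih =>
    rw [pow_succ, bse_mul, ih, act_pow, act_ac, smul_pair, bse_ac]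
    obtain ⟨x, y⟩ := v
    simp only [Prod.mk_add_mk, Prod.mk_eq_zero, mul_zero, mul_one, add_zero]
    push_cast
    split_ifs <;> first | rfl | decide | omega | (exfalso; omega)

lemma bse_w2 (v : ℤ × ℤ) : bse (c6⁻¹ * a6) v = if v = ((0 : ℤ), (1 : ℤ)) then 1 else 0 := by
  rw [bse_mul, bse_inv, bse_c6, zero_add, bse_a6]
  have hact : act c6⁻¹ = ((0 : ℤ), (-1 : ℤ)) := rfl
  rw [hact]
  obtain ⟨x, y⟩ := v
  simp only [Prod.mk_add_mk, Prod.mk_eq_zero, Prod.mk.injEq, add_zero]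
  split_ifs <;> first | rfl | omega

lemma act_w2 : act (c6⁻¹ * a6) = ((0 : ℤ), (-1 : ℤ)) := rfl

lemma bse_w2_pow (m : ℕ) (v : ℤ × ℤ) :
    bse ((c6⁻¹ * a6) ^ m) v = if v.1 = 0 ∧ 1 ≤ v.2 ∧ v.2 ≤ (m : ℤ) then 1 else 0 := by
  induction m generalizing v with
  | zero =>
    rw [pow_zero, bse_one, if_neg (by push_cast; omega)]
  | succ k ih =>
    rw [pow_succ, bse_mul, ih, act_pow, act_w2, smul_pair, bse_w2]
    obtain ⟨x, y⟩ := v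
    simp only [Prod.mk_add_mk, Prod.mk.injEq, mul_zero, add_zero]
    push_cast
    split_ifs <;> first | rfl | decide | omega | (exfalso; omega)

/-- The distorted elements: lamps on two columns at distance `n`, over `n` rows. -/
noncomputable def gword (n : ℕ) : Z2wrZ2 :=
  (a6 * c6) ^ n * b6 ^ n * (c6⁻¹ * a6) ^ n * (b6⁻¹) ^ n

lemma act_gword (n : ℕ) : act (gword n) = 0 := by
  simp only [gword, act_mul, act_pow, act_inv, act_a6, act_b6, act_c6, zero_add, add_zero,
    Prod.neg_mk, neg_zero, smul_pair]
  simp only [Prod.mk_add_mk, mul_zero, mul_one]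
  rw [Prod.mk_eq_zero]
  constructor <;> ring

lemma bse_gword (n : ℕ) (v : ℤ × ℤ) :
    bse (gword n) v =
      if (v.1 = 0 ∨ v.1 = -(n : ℤ)) ∧ 1 - (n : ℤ) ≤ v.2 ∧ v.2 ≤ 0 then 1 else 0 := by
  have hb : ∀ u, bse (b6 ^ n) u = 0 := bse_pow_eq_zero bse_b6 n
  have hbi : ∀ u, bse ((b6⁻¹) ^ n) u = 0 :=
    bse_pow_eq_zero (fun u => by rw [bse_inv]; exact bse_b6 _) n
  simp only [gword, bse_mul, hb, hbi, add_zero, zero_add, bse_ac_pow, bse_w2_pow,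
    act_mul, act_pow, act_inv, act_a6, act_b6, act_c6, Prod.neg_mk, neg_zero, smul_pair]
  obtain ⟨x, y⟩ := v
  simp only [Prod.mk_add_mk, mul_zero, mul_one, add_zero, zero_add, Prod.fst, Prod.snd]
  split_ifs <;> first | rfl | decide | omega | (exfalso; omega)

lemma point_support_finite_int (w : ℤ) (c : ZMod 2) :
    (support fun x : ℤ => if x = w then c else 0).Finite := by
  apply (Set.finite_singleton w).subset
  intro u hu
  simp only [mem_support] at hu
  by_cases h : u = w
  · simpa using h
  · exact absurd (if_neg h) hu

lemma PS_gword (n : ℕ) (v : ℤ × ℤ) :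
    PS (bse (gword n)) v =
      if (-(n : ℤ) ≤ v.1 ∧ v.1 ≤ -1) ∧ 1 - (n : ℤ) ≤ v.2 ∧ v.2 ≤ 0 then 1 else 0 := by
  unfold PS
  have hfun : (fun x : ℤ => if x ≤ v.1 then bse (gword n) (x, v.2) else 0)
      = fun x => (if x = 0 then (if (1 - (n : ℤ) ≤ v.2 ∧ v.2 ≤ 0) ∧ 0 ≤ v.1 then (1 : ZMod 2) else 0) else 0)
        + (if x = -(n : ℤ) then (if ((1 - (n : ℤ) ≤ v.2 ∧ v.2 ≤ 0) ∧ -(n:ℤ) ≤ v.1) ∧ 0 < n then (1 : ZMod 2) else 0) else 0) := by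
    funext x
    rw [bse_gword]
    dsimp only
    split_ifs <;> first | rfl | decide | omega | (exfalso; omega)
  rw [hfun, finsum_add_distrib (point_support_finite_int 0 _) (point_support_finite_int (-(n:ℤ)) _),
    finsum_eq_single _ (0 : ℤ) (fun x hx => if_neg hx),
    finsum_eq_single _ (-(n : ℤ)) (fun x hx => if_neg hx), if_pos rfl, if_pos rfl]
  split_ifs <;> first | rfl | decide | omega | (exfalso; omega)

lemma spt_gword (n : ℕ) :
    spt (gword n) = ↑(Finset.Icc (-(n : ℤ)) (-1) ×ˢ Finset.Icc (1 - (n : ℤ)) 0) := by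
  ext v
  show PS (bse (gword n)) v ≠ 0 ↔ _
  rw [PS_gword, Finset.mem_coe, Finset.mem_product, Finset.mem_Icc, Finset.mem_Icc]
  split_ifs with h
  · exact ⟨fun _ => h, fun _ => one_ne_zero⟩
  · exact ⟨fun h0 => absurd rfl h0, fun hc => absurd hc h⟩

lemma good_gword (n : ℕ) : GoodEl (gword n) := by
  unfold GoodEl
  rw [spt_gword]
  exact (Finset.Icc (-(n : ℤ)) (-1) ×ˢ Finset.Icc (1 - (n : ℤ)) 0).finite_toSet

lemma nu_gword (n : ℕ) : nu (gword n) = n * n := by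
  have h1 : ((-1 : ℤ) + 1 - -(n : ℤ)).toNat = n := by omega
  have h2 : ((0 : ℤ) + 1 - (1 - (n : ℤ))).toNat = n := by omega
  simp only [nu, act_gword, spt_gword, Set.ncard_coe_finset, Finset.card_product,
    Int.card_Icc, h1, h2, Prod.fst_zero, Prod.snd_zero, Int.natAbs_zero, add_zero]

/-! ### Membership of `gword n` in the subgroup -/

/-- The subgroup `H`. -/
abbrev H6 : Subgroup Z2wrZ2 := Subgroup.closure {b6, c6, ⁅a6, b6⁆}

lemma b6_mem : b6 ∈ H6 := Subgroup.subset_closure (by simp)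
lemma c6_mem : c6 ∈ H6 := Subgroup.subset_closure (by simp)
lemma t_mem : ⁅a6, b6⁆ ∈ H6 := Subgroup.subset_closure (by simp)

/-- Active elements. -/
def actL (w : ℤ × ℤ) : Z2wrZ2 := ofActive _ _ (ofAdd w)

lemma bse_actL (w : ℤ × ℤ) (v : ℤ × ℤ) : bse (actL w) v = 0 := rfl
lemma act_actL (w : ℤ × ℤ) : act (actL w) = w := rfl

lemma actL_eq (w : ℤ × ℤ) : actL w = b6 ^ w.1 * c6 ^ w.2 := by
  have h1 : w.1 • ((1 : ℤ), (0 : ℤ)) + w.2 • ((0 : ℤ), (1 : ℤ)) = w := by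
    rw [Prod.smul_mk, Prod.smul_mk, Prod.mk_add_mk]
    simp [smul_eq_mul]
  have h2 : (ofAdd w : Multiplicative (ℤ × ℤ)) =
      ofAdd (((1 : ℤ), (0 : ℤ)) : ℤ × ℤ) ^ w.1 * ofAdd (((0 : ℤ), (1 : ℤ)) : ℤ × ℤ) ^ w.2 := by
    rw [← ofAdd_zsmul, ← ofAdd_zsmul, ← ofAdd_add, h1]
  show SemidirectProduct.inr (ofAdd w) = _
  rw [h2, map_mul, map_zpow, map_zpow]
  rfl

lemma actL_mem (w : ℤ × ℤ) : actL w ∈ H6 := by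
  rw [actL_eq]
  exact mul_mem (zpow_mem b6_mem _) (zpow_mem c6_mem _)

/-- Dominoes: conjugates of the commutator by active elements. -/
noncomputable def dom (p : ℤ × ℤ) : Z2wrZ2 := actL p * ⁅a6, b6⁆ * (actL p)⁻¹

lemma dom_mem (p : ℤ × ℤ) : dom p ∈ H6 :=
  mul_mem (mul_mem (actL_mem p) t_mem) (inv_mem (actL_mem p))

lemma act_dom (p : ℤ × ℤ) : act (dom p) = 0 := by
  simp only [dom, act_mul, act_inv, act_actL, act_t]
  abel

lemma bse_dom (p v : ℤ × ℤ) : bse (dom p) v =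
    (if v = (-p.1, -p.2) then 1 else 0) + (if v = (-p.1 - 1, -p.2) then 1 else 0) := by
  simp only [dom, bse_mul, bse_inv, bse_actL, act_mul, act_actL, act_t, add_zero, zero_add, bse_t]
  obtain ⟨x, y⟩ := v
  obtain ⟨px, py⟩ := p
  simp only [Prod.mk_add_mk, Prod.mk.injEq]
  split_ifs <;> first | rfl | decide | omega | (exfalso; omega)

lemma act_list_prod : ∀ L : List Z2wrZ2, (∀ g ∈ L, act g = 0) → act L.prod = 0
  | [] => fun _ => act_one
  | (g :: L) => fun h => by
      rw [List.prod_cons, act_mul, h g List.mem_cons_self,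
        act_list_prod L (fun x hx => h x (List.mem_cons_of_mem g hx)), add_zero]

lemma bse_list_prod : ∀ L : List Z2wrZ2, (∀ g ∈ L, act g = 0) → ∀ v,
    bse L.prod v = (L.map fun g => bse g v).sum
  | [] => by intro _ v; simp [bse_one]
  | (g :: L) => by
      intro h v
      rw [List.prod_cons, bse_mul, h g List.mem_cons_self, add_zero, List.map_cons,
        List.sum_cons, bse_list_prod L (fun x hx => h x (List.mem_cons_of_mem g hx)) v]

/-- A row of dominoes. -/
noncomputable def rowL (n : ℕ) (j : ℤ) : Z2wrZ2 :=
  ((List.range n).map fun k : ℕ => dom ((k : ℤ), j)).prod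

/-- The product-of-dominoes form of `gword n`. -/
noncomputable def FFL (n : ℕ) : Z2wrZ2 :=
  ((List.range n).map fun j : ℕ => rowL n (j : ℤ)).prod

lemma rowL_mem (n : ℕ) (j : ℤ) : rowL n j ∈ H6 :=
  list_prod_mem fun x hx => by
    simp only [List.mem_map] at hx
    obtain ⟨k, _, rfl⟩ := hx
    exact dom_mem _

lemma FFL_mem (n : ℕ) : FFL n ∈ H6 :=
  list_prod_mem fun x hx => by
    simp only [List.mem_map] at hx
    obtain ⟨j, _, rfl⟩ := hx
    exact rowL_mem n _

lemma act_rowL (n : ℕ) (j : ℤ) : act (rowL n j) = 0 :=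
  act_list_prod _ fun g hg => by
    simp only [List.mem_map] at hg
    obtain ⟨k, _, rfl⟩ := hg
    exact act_dom _

lemma act_FFL (n : ℕ) : act (FFL n) = 0 :=
  act_list_prod _ fun g hg => by
    simp only [List.mem_map] at hg
    obtain ⟨j, _, rfl⟩ := hg
    exact act_rowL n _

lemma bse_rowL (n : ℕ) (j : ℤ) (v : ℤ × ℤ) :
    bse (rowL n j) v =
      (if v = ((0 : ℤ), -j) then 1 else 0) + (if v = (-(n : ℤ), -j) then 1 else 0) := by
  induction n with
  | zero =>
    unfold rowL
    rw [List.range_zero, List.map_nil, List.prod_nil, bse_one]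
    simp only [Nat.cast_zero, neg_zero]
    exact (CharTwo.add_self_eq_zero _).symm
  | succ m ih =>
    unfold rowL at ih ⊢
    rw [List.range_succ, List.map_append, List.prod_append]
    have hact : act ((List.range m).map fun k : ℕ => dom ((k : ℤ), j)).prod = 0 :=
      act_list_prod _ fun g hg => by
        simp only [List.mem_map] at hg
        obtain ⟨k, _, rfl⟩ := hg
        exact act_dom _
    rw [bse_mul, hact, add_zero, ih]
    simp only [List.map_cons, List.map_nil, List.prod_cons, List.prod_nil, mul_one]
    rw [bse_dom]
    obtain ⟨x, y⟩ := v
    simp only [Prod.mk.injEq]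
    push_cast
    split_ifs <;> first | rfl | decide | omega | (exfalso; omega)

lemma bse_FFL (n : ℕ) (v : ℤ × ℤ) : bse (FFL n) v = bse (gword n) v := by
  unfold FFL
  rw [bse_list_prod _ (fun g hg => by
    simp only [List.mem_map] at hg
    obtain ⟨j, _, rfl⟩ := hg
    exact act_rowL n _) v]
  have key : ∀ r : ℕ,
      (((List.range r).map fun j : ℕ => rowL n (j : ℤ)).map fun g => bse g v).sum =
        if (v.1 = 0 ∨ v.1 = -(n : ℤ)) ∧ 0 < n ∧ 1 - (r : ℤ) ≤ v.2 ∧ v.2 ≤ 0 then 1 else 0 := by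
    intro r
    induction r with
    | zero =>
      rw [List.range_zero, List.map_nil, List.map_nil, List.sum_nil,
        if_neg (by push_cast; omega)]
    | succ m ih =>
      rw [List.range_succ, List.map_append, List.map_append, List.sum_append, ih]
      simp only [List.map_cons, List.map_nil, List.sum_cons, List.sum_nil, add_zero]
      rw [bse_rowL]
      obtain ⟨x, y⟩ := v
      simp only [Prod.mk.injEq]
      push_cast
      split_ifs <;> first | rfl | decide | omega | (exfalso; omega)
  rw [key n, bse_gword]
  obtain ⟨x, y⟩ := v
  split_ifs <;> first | rfl | decide | omega | (exfalso; omega)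

lemma gword_eq_FFL (n : ℕ) : gword n = FFL n :=
  ext_bse_act (funext fun v => (bse_FFL n v).symm) (by rw [act_gword, act_FFL])

lemma gword_mem (n : ℕ) : gword n ∈ H6 := by
  rw [gword_eq_FFL]; exact FFL_mem n


/-! ### Word length tools -/

lemma wordLength_le_of_list {γ : Type*} [Group γ] (T : Set γ) (g : γ) (L : List γ)
    (hL : ∀ x ∈ L, x ∈ T ∪ T⁻¹) (hp : L.prod = g) : wordLength T g ≤ L.length :=
  Nat.sInf_le ⟨L.get, fun i => hL _ (L.get_mem i), by rw [List.ofFn_get]; exact hp⟩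

lemma exists_word {γ : Type*} [Group γ] {T : Set γ} {g : γ} (hg : g ∈ Subgroup.closure T) :
    ∃ L : List γ, (∀ x ∈ L, x ∈ T ∪ T⁻¹) ∧ L.prod = g := by
  have h1 : g ∈ (Subgroup.closure T).toSubmonoid := hg
  rw [Subgroup.closure_toSubmonoid] at h1
  exact Submonoid.exists_list_of_mem_closure h1

lemma wordLength_spec {γ : Type*} [Group γ] {T : Set γ} {g : γ} (hg : g ∈ Subgroup.closure T) :
    ∃ f : Fin (wordLength T g) → γ, (∀ i, f i ∈ T ∪ T⁻¹) ∧ (List.ofFn f).prod = g := by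
  obtain ⟨L, h1, h2⟩ := exists_word hg
  have hne : {n | ∃ f : Fin n → γ, (∀ i, f i ∈ T ∪ T⁻¹) ∧ (List.ofFn f).prod = g}.Nonempty :=
    ⟨L.length, L.get, fun i => h1 _ (L.get_mem i), by rw [List.ofFn_get]; exact h2⟩
  exact Nat.sInf_mem hne

lemma list_prod_mem_pow {γ : Type*} [Group γ] (s : Set γ) :
    ∀ L : List γ, (∀ x ∈ L, x ∈ s) → L.prod ∈ s ^ L.length
  | [], _ => by simp [Set.mem_one]
  | (x :: L), h => by
      rw [List.prod_cons, List.length_cons, pow_succ']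
      exact Set.mul_mem_mul (h x List.mem_cons_self)
        (list_prod_mem_pow s L fun y hy => h y (List.mem_cons_of_mem x hy))

lemma set_pow_finite {γ : Type*} [Group γ] {s : Set γ} (hs : s.Finite) :
    ∀ n : ℕ, (s ^ n : Set γ).Finite
  | 0 => by rw [pow_zero]; exact Set.finite_one
  | (n + 1) => by rw [pow_succ]; exact (set_pow_finite hs n).mul hs

lemma ball_finite {γ : Type*} [Group γ] {T : Set γ} (hT : T.Finite) (l : ℕ) :
    {g : γ | ∃ L : List γ, (∀ x ∈ L, x ∈ T ∪ T⁻¹) ∧ L.length ≤ l ∧ L.prod = g}.Finite := by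
  have hs : (T ∪ T⁻¹ ∪ {1} : Set γ).Finite := (hT.union hT.inv).union (Set.finite_singleton 1)
  apply (set_pow_finite hs l).subset
  rintro g ⟨L, hmem, hlen, rfl⟩
  have hmem' : ∀ x ∈ L ++ List.replicate (l - L.length) 1, x ∈ T ∪ T⁻¹ ∪ {1} := by
    intro x hx
    rcases List.mem_append.1 hx with hx | hx
    · exact Or.inl (hmem x hx)
    · exact Or.inr (by simp [(List.mem_replicate.1 hx).2])
  have hthis := list_prod_mem_pow _ _ hmem'
  rw [List.prod_append, List.prod_replicate, one_pow, mul_one, List.length_append,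
    List.length_replicate, Nat.add_sub_cancel' hlen] at hthis
  exact hthis

lemma H6_le_T6 : H6 ≤ Subgroup.closure ({a6, b6, c6} : Set Z2wrZ2) := by
  rw [Subgroup.closure_le]
  have ha : a6 ∈ Subgroup.closure ({a6, b6, c6} : Set Z2wrZ2) := Subgroup.subset_closure (by simp)
  have hb : b6 ∈ Subgroup.closure ({a6, b6, c6} : Set Z2wrZ2) := Subgroup.subset_closure (by simp)
  have hc : c6 ∈ Subgroup.closure ({a6, b6, c6} : Set Z2wrZ2) := Subgroup.subset_closure (by simp)
  intro x hx
  simp only [Set.mem_insert_iff, Set.mem_singleton_iff] at hx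
  rcases hx with rfl | rfl | rfl
  · exact hb
  · exact hc
  · rw [commutatorElement_def]
    exact mul_mem (mul_mem (mul_mem ha hb) (inv_mem ha)) (inv_mem hb)

/-! ### Goodness on the subgroup -/

lemma good_of_bse_zero {g : Z2wrZ2} (hg : ∀ v, bse g v = 0) : GoodEl g := by
  have hspt : spt g = ∅ := by
    ext v
    simp only [spt, Set.mem_setOf_eq, Set.mem_empty_iff_false, iff_false, not_not]
    have hb : bse g = fun _ => 0 := funext hg
    rw [hb, PS_zero]
  unfold GoodEl
  rw [hspt]
  exact Set.finite_empty

lemma good_t : GoodEl ⁅a6, b6⁆ := by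
  have hPS : ∀ v : ℤ × ℤ, PS (bse ⁅a6, b6⁆) v =
      (if v.2 = 0 ∧ 0 ≤ v.1 then (1 : ZMod 2) else 0) +
        (if v.2 = 0 ∧ -1 ≤ v.1 then 1 else 0) := by
    intro v
    have hb : bse ⁅a6, b6⁆ = fun u =>
        (if u = ((0 : ℤ), (0 : ℤ)) then (1 : ZMod 2) else 0) +
          (if u = ((-1 : ℤ), (0 : ℤ)) then 1 else 0) := funext bse_t
    rw [hb, PS_add _ _ (point_support_finite _ _) (point_support_finite _ _), PS_point, PS_point]
  apply (Set.finite_singleton ((-1 : ℤ), (0 : ℤ))).subset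
  intro v hv
  simp only [spt, Set.mem_setOf_eq, hPS] at hv
  simp only [Set.mem_singleton_iff]
  obtain ⟨x, y⟩ := v
  dsimp only at hv
  split_ifs at hv with h1 h2 h2
  · exact absurd (by decide) hv
  · exact absurd ⟨h1.1, by omega⟩ h2
  · rw [Prod.mk.injEq]
    constructor <;> omega
  · exact absurd (by decide) hv

lemma good_of_mem_H6 : ∀ g ∈ H6, GoodEl g := fun g hg =>
  Subgroup.closure_induction
    (fun x hx => by
      simp only [Set.mem_insert_iff, Set.mem_singleton_iff] at hx
      rcases hx with rfl | rfl | rfl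
      · exact good_of_bse_zero bse_b6
      · exact good_of_bse_zero bse_c6
      · exact good_t)
    good_one
    (fun x y _ _ hx hy => good_mul hx hy)
    (fun x _ hx => good_inv hx) hg

lemma nu_list_prod_le (C0 : ℕ) :
    ∀ L : List ↥H6, (∀ x ∈ L, nu (x : Z2wrZ2) ≤ C0) →
      nu ((L.prod : ↥H6) : Z2wrZ2) ≤ C0 * L.length
  | [], _ => by
      simp only [List.prod_nil, OneMemClass.coe_one, nu_one, List.length_nil, mul_zero, le_refl]
  | (x :: L), h => by
      have hco : ((List.prod (x :: L) : ↥H6) : Z2wrZ2) =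
          (x : Z2wrZ2) * ((L.prod : ↥H6) : Z2wrZ2) := by
        rw [List.prod_cons]; rfl
      rw [hco, List.length_cons]
      refine le_trans (nu_mul_le (good_of_mem_H6 _ x.2) (good_of_mem_H6 _ (L.prod).2)) ?_
      have hrec := nu_list_prod_le C0 L fun y hy => h y (List.mem_cons_of_mem x hy)
      have hx := h x List.mem_cons_self
      have : C0 + C0 * L.length = C0 * (L.length + 1) := by ring
      omega

/-! ### The word for `gword n` -/

lemma replicate_flatten_prod {γ : Type*} [Monoid γ] (l : List γ) :
    ∀ n : ℕ, (List.replicate n l).flatten.prod = l.prod ^ n ∧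
      (List.replicate n l).flatten.length = n * l.length
  | 0 => by simp
  | (n + 1) => by
      rw [List.replicate_succ, List.flatten_cons]
      have ih := replicate_flatten_prod l n
      constructor
      · rw [List.prod_append, ih.1, pow_succ']
      · rw [List.length_append, ih.2]; ring

/-- An explicit word of length `6 n` for `gword n`. -/
noncomputable def wlist (n : ℕ) : List Z2wrZ2 :=
  (List.replicate n [a6, c6]).flatten ++ (List.replicate n b6 ++
    ((List.replicate n [c6⁻¹, a6]).flatten ++ List.replicate n b6⁻¹))

lemma wlist_prod (n : ℕ) : (wlist n).prod = gword n := by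
  have h1 := (replicate_flatten_prod [a6, c6] n).1
  have h2 := (replicate_flatten_prod [c6⁻¹, a6] n).1
  simp only [wlist, List.prod_append, h1, h2, List.prod_replicate, List.prod_cons,
    List.prod_nil, mul_one]
  rw [gword]
  simp [mul_assoc]

lemma wlist_length (n : ℕ) : (wlist n).length = 6 * n := by
  have h1 := (replicate_flatten_prod [a6, c6] n).2
  have h2 := (replicate_flatten_prod [c6⁻¹, a6] n).2
  simp only [wlist, List.length_append, h1, h2, List.length_replicate, List.length_cons,
    List.length_nil]
  ring

lemma wlist_mem (n : ℕ) : ∀ x ∈ wlist n,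
    x ∈ ({a6, b6, c6} : Set Z2wrZ2) ∪ ({a6, b6, c6} : Set Z2wrZ2)⁻¹ := by
  intro x hx
  rcases List.mem_append.1 hx with hx | hx
  · obtain ⟨l, hl, hxl⟩ := List.mem_flatten.1 hx
    rw [(List.mem_replicate.1 hl).2] at hxl
    rcases List.mem_cons.1 hxl with rfl | hxl
    · exact Or.inl (by simp)
    · rcases List.mem_cons.1 hxl with rfl | hxl
      · exact Or.inl (by simp)
      · exact absurd hxl List.not_mem_nil
  rcases List.mem_append.1 hx with hx | hx
  · rw [(List.mem_replicate.1 hx).2]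
    exact Or.inl (by simp)
  rcases List.mem_append.1 hx with hx | hx
  · obtain ⟨l, hl, hxl⟩ := List.mem_flatten.1 hx
    rw [(List.mem_replicate.1 hl).2] at hxl
    rcases List.mem_cons.1 hxl with rfl | hxl
    · exact Or.inr (Set.mem_inv.2 (by simp))
    · rcases List.mem_cons.1 hxl with rfl | hxl
      · exact Or.inl (by simp)
      · exact absurd hxl List.not_mem_nil
  · rw [(List.mem_replicate.1 hx).2]
    exact Or.inr (Set.mem_inv.2 (by simp))

end Statement6Proof


/-- The subgroup `H = ⟨b, c, [a,b]⟩` of `(ℤ/2ℤ) wr ℤ²` satisfies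
`Δ_H ⪰ l²`; in particular it is a distorted finitely generated subgroup. -/
theorem statement6 :
    ∀ S : Set ↥(Subgroup.closure {b6, c6, ⁅a6, b6⁆}),
      S.Finite → Subgroup.closure S = ⊤ →
      Dominates (fun l => l ^ 2)
        (distortion {a6, b6, c6} (Subgroup.closure {b6, c6, ⁅a6, b6⁆}) S) ∧
      ¬ DistEquiv (distortion {a6, b6, c6} (Subgroup.closure {b6, c6, ⁅a6, b6⁆}) S)
          (fun l => l) := by
  intro S hS hgen
  have hTfin : ({a6, b6, c6} : Set Z2wrZ2).Finite :=
    ((Set.finite_singleton c6).insert b6).insert a6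
  set C0 : ℕ := (hS.toFinset.sup fun s : ↥H6 => nu (s : Z2wrZ2)) + 1 with hC0def
  have hbound : ∀ x : ↥H6, x ∈ S ∪ S⁻¹ → nu (x : Z2wrZ2) ≤ C0 := by
    intro x hx
    rcases hx with hx | hx
    · exact le_trans (Finset.le_sup (f := fun s : ↥H6 => nu (s : Z2wrZ2))
        (hS.mem_toFinset.2 hx)) (Nat.le_succ _)
    · have hx' : x⁻¹ ∈ S := Set.mem_inv.1 hx
      have heq : nu (x : Z2wrZ2) = nu ((x⁻¹ : ↥H6) : Z2wrZ2) := by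
        rw [show ((x⁻¹ : ↥H6) : Z2wrZ2) = ((x : Z2wrZ2))⁻¹ from rfl, nu_inv]
      rw [heq]
      exact le_trans (Finset.le_sup (f := fun s : ↥H6 => nu (s : Z2wrZ2))
        (hS.mem_toFinset.2 hx')) (Nat.le_succ _)
  have hkey : ∀ l : ℕ,
      l ^ 2 ≤ C0 * distortion {a6, b6, c6} H6 S ((C0 + 6) * l) := by
    intro l
    have hglmem := gword_mem l
    set gl : ↥H6 := ⟨gword l, hglmem⟩ with hgldef
    have hwT : wordLength {a6, b6, c6} (gword l) ≤ (C0 + 6) * l := by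
      have hle := wordLength_le_of_list {a6, b6, c6} (gword l) (wlist l)
        (wlist_mem l) (wlist_prod l)
      rw [wlist_length] at hle
      exact le_trans hle (Nat.mul_le_mul (by omega) le_rfl)
    have hball : {h : ↥H6 | wordLength {a6, b6, c6} ((h : Z2wrZ2)) ≤ (C0 + 6) * l}.Finite := by
      apply Set.Finite.subset ((ball_finite hTfin ((C0 + 6) * l)).preimage
        (Set.injOn_of_injective (Subtype.val_injective (p := fun x => x ∈ H6))))
      intro h hh
      obtain ⟨f, hf1, hf2⟩ := wordLength_spec (H6_le_T6 h.2)
      refine ⟨List.ofFn f, fun x hx => ?_, ?_, hf2⟩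
      · obtain ⟨i, rfl⟩ := List.mem_ofFn.1 hx
        exact hf1 i
      · rw [List.length_ofFn]
        exact hh
    have hbdd : BddAbove (wordLength S ''
        {h : ↥H6 | wordLength {a6, b6, c6} ((h : Z2wrZ2)) ≤ (C0 + 6) * l}) :=
      (hball.image _).bddAbove
    have hmem : wordLength S gl ∈ wordLength S ''
        {h : ↥H6 | wordLength {a6, b6, c6} ((h : Z2wrZ2)) ≤ (C0 + 6) * l} :=
      ⟨gl, hwT, rfl⟩
    have hdist : wordLength S gl ≤ distortion {a6, b6, c6} H6 S ((C0 + 6) * l) :=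
      le_csSup hbdd hmem
    have hglS : gl ∈ Subgroup.closure S := by
      rw [hgen]
      exact Subgroup.mem_top gl
    obtain ⟨f, hf1, hf2⟩ := wordLength_spec hglS
    have hnu : nu ((gl : ↥H6) : Z2wrZ2) ≤ C0 * wordLength S gl := by
      have h3 := nu_list_prod_le C0 (List.ofFn f) (fun x hx => by
        obtain ⟨i, rfl⟩ := List.mem_ofFn.1 hx
        exact hbound _ (hf1 i))
      rw [hf2, List.length_ofFn] at h3
      exact h3
    have hval : nu ((gl : ↥H6) : Z2wrZ2) = l * l := nu_gword l
    calc l ^ 2 = l * l := pow_two l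
      _ = nu ((gl : ↥H6) : Z2wrZ2) := hval.symm
      _ ≤ C0 * wordLength S gl := hnu
      _ ≤ C0 * distortion {a6, b6, c6} H6 S ((C0 + 6) * l) := Nat.mul_le_mul le_rfl hdist
  have hdom : Dominates (fun l => l ^ 2) (distortion {a6, b6, c6} H6 S) :=
    ⟨C0 + 6, by omega, fun l => le_trans (hkey l) (Nat.mul_le_mul (by omega) le_rfl)⟩
  refine ⟨hdom, ?_⟩
  rintro ⟨⟨C1, hC1, h1⟩, -⟩
  set L : ℕ := C0 * (C1 * C1 * (C0 + 6)) + 1 with hLdef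
  have hcon := hkey L
  have h2 : distortion {a6, b6, c6} H6 S ((C0 + 6) * L) ≤ C1 * (C1 * ((C0 + 6) * L)) :=
    h1 ((C0 + 6) * L)
  have h3 : L ^ 2 ≤ C0 * (C1 * (C1 * ((C0 + 6) * L))) :=
    le_trans hcon (Nat.mul_le_mul le_rfl h2)
  have h4 : L ^ 2 ≤ (L - 1) * L := by
    calc L ^ 2 ≤ C0 * (C1 * (C1 * ((C0 + 6) * L))) := h3
      _ = (C0 * (C1 * C1 * (C0 + 6))) * L := by ring
      _ = (L - 1) * L := by rw [hLdef, Nat.add_sub_cancel]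
  have h5 : L * L ≤ (L - 1) * L := by rw [← pow_two]; exact h4
  have h6 : L ≤ L - 1 := Nat.le_of_mul_le_mul_right h5 (by omega)
  omega


end DistortionPaper
end

section
/- For integers k ≥ 2 and l ≥ 2, the free solvable group S_{k,l} = F_k / F_k^{(l)} — the quotient of the free group F_k of rank k by the l-th term of its derived series — contains a subgroup isomorphic to the wreath product ℤ wr ℤ. -/
open scoped Pointwise
open scoped commutatorElement

namespace DistortionPaper

instance (k l : ℕ) : (derivedSeries (FreeGroup (Fin k)) l).Normal :=
  derivedSeries_normal _ l

/-- The free solvable group `S_{k,l}` of rank `k` and derived length `l`. -/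
abbrev FreeSolvable (k l : ℕ) :=
  FreeGroup (Fin k) ⧸ derivedSeries (FreeGroup (Fin k)) l

section Embedding

open Multiplicative SemidirectProduct Finsupp

instance {G : Type*} [Group G] (n : ℕ) : (derivedSeries G n).Normal :=
  derivedSeries_normal _ n

/-- Additive model of the base group of `ℤ wr ℤ`. -/
abbrev PZ := Multiplicative (ℤ →₀ ℤ)

/-- The base group of `ℤ wr ℤ`. -/
abbrev WZ := WreathBase Mℤ Mℤ

/-- Identification of `PZ` with the base group `WZ`. -/
noncomputable def eW : PZ ≃* WZ where
  toFun p := ⟨fun z => Multiplicative.ofAdd (p.toAdd z.toAdd), by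
    refine Set.Finite.subset ((p.toAdd.support.finite_toSet).image Multiplicative.ofAdd) ?_
    intro z hz
    simp only [Function.mem_mulSupport] at hz
    refine ⟨z.toAdd, ?_, rfl⟩
    simp only [Finset.mem_coe, Finsupp.mem_support_iff]
    intro h
    exact hz (by rw [h]; rfl)⟩
  invFun w := Multiplicative.ofAdd (Finsupp.ofSupportFinite
      (fun n => ((w : Mℤ → Mℤ) (Multiplicative.ofAdd n)).toAdd) (by
    refine Set.Finite.subset (w.2.image Multiplicative.toAdd) ?_
    intro n hn
    simp only [Function.mem_support] at hn
    refine ⟨Multiplicative.ofAdd n, ?_, rfl⟩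
    simp only [Function.mem_mulSupport]
    intro h
    exact hn (by rw [h]; rfl)))
  left_inv p := by
    apply Multiplicative.toAdd.injective
    ext n
    rfl
  right_inv w := Subtype.ext <| funext fun z => rfl
  map_mul' p q := Subtype.ext <| funext fun z => by
    simp only [Subgroup.coe_mul, Pi.mul_apply]
    rw [show (p * q).toAdd = p.toAdd + q.toAdd from rfl, Finsupp.add_apply, ofAdd_add]

lemma eW_coe_apply (p : PZ) (z : Mℤ) :
    ((eW p : WZ) : Mℤ → Mℤ) z = Multiplicative.ofAdd (p.toAdd z.toAdd) := rfl

/-- Extensionality for monoid homs out of `PZ` via singles. -/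
theorem mhom_ext {H : Type*} [Group H] {f g : PZ →* H}
    (h : ∀ n : ℤ, f (Multiplicative.ofAdd (Finsupp.single n 1)) =
      g (Multiplicative.ofAdd (Finsupp.single n 1))) : f = g := by
  have key : ∀ q : ℤ →₀ ℤ, f (Multiplicative.ofAdd q) = g (Multiplicative.ofAdd q) := by
    intro q
    induction q using Finsupp.induction with
    | zero => show f 1 = g 1; rw [map_one, map_one]
    | single_add a b q _ _ ih =>
      have hsplit : (Multiplicative.ofAdd (Finsupp.single a b + q) : PZ) =
          Multiplicative.ofAdd (Finsupp.single a b) * Multiplicative.ofAdd q := rfl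
      have hsingle : (Multiplicative.ofAdd (Finsupp.single a b) : PZ) =
          (Multiplicative.ofAdd (Finsupp.single a (1 : ℤ))) ^ b := by
        have hs : Finsupp.single a b = b • Finsupp.single a (1 : ℤ) := by
          rw [Finsupp.smul_single, smul_eq_mul, mul_one]
        rw [hs]; rfl
      rw [hsplit, map_mul, map_mul, ih, hsingle, map_zpow, map_zpow, h a]
  exact MonoidHom.ext fun p => key p.toAdd

/-- Convolution product on `ℤ →₀ ℤ`, i.e. multiplication in `ℤ[ℤ]`. -/
noncomputable def conv (p q : ℤ →₀ ℤ) : ℤ →₀ ℤ :=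
  ((AddMonoidAlgebra.ofCoeff p : AddMonoidAlgebra ℤ ℤ) * AddMonoidAlgebra.ofCoeff q).coeff

lemma conv_single_apply (n : ℤ) (q : ℤ →₀ ℤ) (m : ℤ) :
    conv (Finsupp.single n 1) q m = q (-n + m) :=
  by
    show (AddMonoidAlgebra.single n (1:ℤ) * AddMonoidAlgebra.ofCoeff q).coeff m = _
    rw [AddMonoidAlgebra.coeff_single_mul_apply, one_mul]

lemma conv_single_single (n n' : ℤ) :
    conv (Finsupp.single n (1 : ℤ)) (Finsupp.single n' 1) = Finsupp.single (n + n') 1 :=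
  by
    show (AddMonoidAlgebra.single n (1:ℤ) * AddMonoidAlgebra.single n' 1).coeff = _
    rw [AddMonoidAlgebra.single_mul_single, one_mul]; rfl

lemma conv_eq_zero {p q : ℤ →₀ ℤ} (hq : q ≠ 0) (h : conv p q = 0) : p = 0 := by
  have := mul_eq_zero.mp (show (AddMonoidAlgebra.ofCoeff p : AddMonoidAlgebra ℤ ℤ) *
    AddMonoidAlgebra.ofCoeff q = 0 from congrArg AddMonoidAlgebra.ofCoeff h)
  exact congrArg AddMonoidAlgebra.coeff
    (this.resolve_right fun h' => hq (congrArg AddMonoidAlgebra.coeff h'))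

/-- The action of a shift on `eW` in coordinates. -/
lemma act_eW (g : Mℤ) (q : ℤ →₀ ℤ) :
    wreathAction Mℤ Mℤ g (eW (Multiplicative.ofAdd q)) =
      eW (Multiplicative.ofAdd (conv (Finsupp.single (-g.toAdd) 1) q)) := by
  apply Subtype.ext
  funext z
  show ((eW (Multiplicative.ofAdd q) : WZ) : Mℤ → Mℤ) (z * g) = _
  rw [eW_coe_apply, eW_coe_apply]
  congr 1
  show q ((z * g).toAdd) = _
  rw [show (z * g).toAdd = z.toAdd + g.toAdd from rfl,
    show (Multiplicative.ofAdd (conv (Finsupp.single (-g.toAdd) 1) q)).toAdd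
      = conv (Finsupp.single (-g.toAdd) 1) q from rfl, conv_single_apply]
  congr 1
  ring

section MetabelianTarget

variable {Q : Type*} [Group Q]

/-- The conjugates `u ^ (-n) * ⁅u, v⁆ * u ^ n`, as elements of the derived subgroup. -/
def cA (u v : Q) (n : ℤ) : ↥(derivedSeries Q 1) :=
  ⟨u ^ (-n) * ⁅u, v⁆ * u ^ n, by
    have h0 : ⁅u, v⁆ ∈ derivedSeries Q 1 := by
      rw [derivedSeries_one]
      exact Subgroup.commutator_mem_commutator (Subgroup.mem_top u) (Subgroup.mem_top v)
    have := (derivedSeries_normal Q 1).conj_mem _ h0 (u ^ (-n))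
    simpa [zpow_neg] using this⟩

lemma cA_coe (u v : Q) (n : ℤ) : (cA u v n : Q) = u ^ (-n) * ⁅u, v⁆ * u ^ n := rfl

/-- If `Q` is metabelian, its derived subgroup is commutative. -/
def commGroupA (hQ : derivedSeries Q 2 = ⊥) : CommGroup ↥(derivedSeries Q 1) :=
  { (inferInstance : Group ↥(derivedSeries Q 1)) with
    mul_comm := fun a b => by
      have h2 : derivedSeries Q 2 = ⁅derivedSeries Q 1, derivedSeries Q 1⁆ :=
        derivedSeries_succ Q 1
      have hmem : ⁅(a : Q), (b : Q)⁆ ∈ derivedSeries Q 2 := by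
        rw [h2]; exact Subgroup.commutator_mem_commutator a.2 b.2
      rw [hQ, Subgroup.mem_bot] at hmem
      exact Subtype.ext (commutatorElement_eq_one_iff_mul_comm.mp hmem) }

/-- The homomorphism `PZ →* Q` sending `single n 1` to `cA u v n`. -/
noncomputable def psiP (hQ : derivedSeries Q 2 = ⊥) (u v : Q) : PZ →* Q :=
  letI : CommGroup ↥(derivedSeries Q 1) := commGroupA hQ
  (derivedSeries Q 1).subtype.comp
    (AddMonoidHom.toMultiplicativeLeft
      (Finsupp.liftAddHom fun n => zmultiplesHom _ (Additive.ofMul (cA u v n))))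

lemma psiP_single (hQ : derivedSeries Q 2 = ⊥) (u v : Q) (n : ℤ) :
    psiP hQ u v (Multiplicative.ofAdd (Finsupp.single n 1)) = (cA u v n : Q) := by
  letI : CommGroup ↥(derivedSeries Q 1) := commGroupA hQ
  show ((derivedSeries Q 1).subtype
    ((Finsupp.liftAddHom fun m => zmultiplesHom _ (Additive.ofMul (cA u v m)))
      (Finsupp.single n 1)).toMul) = _
  erw [Finsupp.liftAddHom_apply_single]
  show (((1 : ℤ) • (Additive.ofMul (cA u v n))).toMul : Q) = _
  rw [one_zsmul]
  rfl

/-- First component of the lift. -/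
noncomputable def phi1 (hQ : derivedSeries Q 2 = ⊥) (u v : Q) : WZ →* Q :=
  (psiP hQ u v).comp eW.symm.toMonoidHom

lemma phi1_eW (hQ : derivedSeries Q 2 = ⊥) (u v : Q) (p : PZ) :
    phi1 hQ u v (eW p) = psiP hQ u v p := by
  simp [phi1]

/-- Second component of the lift. -/
def phi2 (u : Q) : Mℤ →* Q := zpowersHom Q u

lemma psi_compat (hQ : derivedSeries Q 2 = ⊥) (u v : Q) (g : Mℤ) :
    (phi1 hQ u v).comp (wreathAction Mℤ Mℤ g).toMonoidHom =
      (MulAut.conj (phi2 u g)).toMonoidHom.comp (phi1 hQ u v) := by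
  have h : ((phi1 hQ u v).comp (wreathAction Mℤ Mℤ g).toMonoidHom).comp eW.toMonoidHom =
      ((MulAut.conj (phi2 u g)).toMonoidHom.comp (phi1 hQ u v)).comp eW.toMonoidHom := by
    apply mhom_ext
    intro n
    have hact := act_eW g (Finsupp.single n 1)
    rw [conv_single_single] at hact
    simp only [MonoidHom.comp_apply, MulEquiv.coe_toMonoidHom]
    rw [hact, phi1_eW, phi1_eW, psiP_single, psiP_single, MulAut.conj_apply, cA_coe, cA_coe,
      show phi2 u g = u ^ g.toAdd from rfl]
    group
  ext w
  have := DFunLike.congr_fun h (eW.symm w)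
  simpa using this

/-- The candidate embedding `ZwrZ →* Q`. -/
noncomputable def psi (hQ : derivedSeries Q 2 = ⊥) (u v : Q) : ZwrZ →* Q :=
  SemidirectProduct.lift (phi1 hQ u v) (phi2 u) (psi_compat hQ u v)

end MetabelianTarget

/-- Commutativity facts about `ZwrZ`. -/
lemma derivedSeries_MZ_one : derivedSeries Mℤ 1 = ⊥ := by
  rw [derivedSeries_one]
  refine le_bot_iff.mp (Subgroup.commutator_le.mpr ?_)
  intro g _ h _
  rw [Subgroup.mem_bot]
  exact commutatorElement_eq_one_iff_mul_comm.mpr (mul_comm g h)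

lemma derivedSeries_ZwrZ_one_le :
    derivedSeries ZwrZ 1 ≤ (SemidirectProduct.rightHom : ZwrZ →* Mℤ).ker := by
  intro x hx
  have hmem : SemidirectProduct.rightHom x ∈
      (derivedSeries ZwrZ 1).map SemidirectProduct.rightHom := ⟨x, hx, rfl⟩
  have := map_derivedSeries_le_derivedSeries SemidirectProduct.rightHom 1 hmem
  rw [derivedSeries_MZ_one, Subgroup.mem_bot] at this
  exact this

lemma derivedSeries_ZwrZ_two : derivedSeries ZwrZ 2 = ⊥ := by
  have h2 : derivedSeries ZwrZ 2 = ⁅derivedSeries ZwrZ 1, derivedSeries ZwrZ 1⁆ :=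
    derivedSeries_succ ZwrZ 1
  rw [h2]
  refine le_bot_iff.mp (Subgroup.commutator_le.mpr ?_)
  intro g hg h hh
  rw [Subgroup.mem_bot]
  have hg' : g ∈ (SemidirectProduct.inl : WZ →* ZwrZ).range := by
    rw [SemidirectProduct.range_inl_eq_ker_rightHom]
    exact derivedSeries_ZwrZ_one_le hg
  have hh' : h ∈ (SemidirectProduct.inl : WZ →* ZwrZ).range := by
    rw [SemidirectProduct.range_inl_eq_ker_rightHom]
    exact derivedSeries_ZwrZ_one_le hh
  obtain ⟨w1, rfl⟩ := hg'
  obtain ⟨w2, rfl⟩ := hh'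
  rw [commutatorElement_eq_one_iff_mul_comm, ← map_mul, ← map_mul, mul_comm]

/-- The coordinates of the commutator `⁅bZ, aZ⁆`. -/
noncomputable def q0 : ℤ →₀ ℤ := Finsupp.single (-1) 1 - Finsupp.single 0 1

lemma q0_apply_neg_one : q0 (-1) = 1 := by
  rw [q0, Finsupp.sub_apply, Finsupp.single_eq_same, Finsupp.single_eq_of_ne (by norm_num)]
  ring

lemma q0_ne_zero : q0 ≠ 0 := by
  intro h
  have h0 := q0_apply_neg_one
  rw [h] at h0
  simp at h0

lemma wreathAction_coe_apply (g : Mℤ) (f : WZ) (x : Mℤ) :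
    ((wreathAction Mℤ Mℤ g f : WZ) : Mℤ → Mℤ) x = (f : Mℤ → Mℤ) (x * g) := rfl

lemma toBase_coe_apply (a x : Mℤ) :
    ((toBase Mℤ Mℤ a : WZ) : Mℤ → Mℤ) x = if x = 1 then a else 1 := by
  simp [toBase]

lemma commutator_bZ_aZ : ⁅bZ, aZ⁆ = SemidirectProduct.inl (eW (Multiplicative.ofAdd q0)) := by
  have key : ⁅bZ, aZ⁆ = SemidirectProduct.inl
      ((wreathAction Mℤ Mℤ (Multiplicative.ofAdd (1:ℤ))
        (toBase Mℤ Mℤ (Multiplicative.ofAdd 1))) * (toBase Mℤ Mℤ (Multiplicative.ofAdd 1))⁻¹) := by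
    set t : Mℤ := Multiplicative.ofAdd 1 with ht
    set d : WZ := toBase Mℤ Mℤ (Multiplicative.ofAdd 1) with hd
    have haut := SemidirectProduct.inl_aut (φ := wreathAction Mℤ Mℤ) t d
    have h1 : (SemidirectProduct.inl (d⁻¹) : ZwrZ) = (SemidirectProduct.inl d)⁻¹ := map_inv _ d
    have h2 : (SemidirectProduct.inr (t⁻¹) : ZwrZ) = (SemidirectProduct.inr t)⁻¹ := map_inv _ t
    rw [map_mul, haut, h1, h2, commutatorElement_def,
      show bZ = SemidirectProduct.inr t from rfl,
      show aZ = SemidirectProduct.inl d from rfl]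
  rw [key]
  congr 1
  apply Subtype.ext
  funext z
  rw [Subgroup.coe_mul, Pi.mul_apply, wreathAction_coe_apply, Subgroup.coe_inv, Pi.inv_apply,
    toBase_coe_apply, toBase_coe_apply, eW_coe_apply]
  have h1 : (z * Multiplicative.ofAdd (1:ℤ) = 1) = (z.toAdd = -1) := by
    apply propext
    constructor
    · intro h
      have := congrArg Multiplicative.toAdd h
      simp only [toAdd_mul, toAdd_ofAdd, toAdd_one] at this
      omega
    · intro h
      apply Multiplicative.toAdd.injective
      simp [h]
  have h2 : (z = 1) = (z.toAdd = 0) := by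
    apply propext
    exact ⟨fun h => by rw [h]; rfl, fun h => Multiplicative.toAdd.injective (by simpa using h)⟩
  apply Multiplicative.toAdd.injective
  rw [toAdd_mul, toAdd_inv]
  rw [apply_ite Multiplicative.toAdd, apply_ite Multiplicative.toAdd]
  simp only [toAdd_ofAdd, toAdd_one, h1, h2, q0, Finsupp.sub_apply, Finsupp.single_apply]
  split_ifs <;> omega

end Embedding

section Injectivity

open Multiplicative SemidirectProduct

variable {Q : Type*} [Group Q]

lemma ofAdd_one_zpow (m : ℤ) : (Multiplicative.ofAdd (1 : ℤ)) ^ m = Multiplicative.ofAdd m := by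
  apply Multiplicative.toAdd.injective
  rw [toAdd_zpow]
  simp

lemma bZ_zpow (m : ℤ) : bZ ^ m = SemidirectProduct.inr (Multiplicative.ofAdd m) := by
  rw [show bZ = SemidirectProduct.inr (Multiplicative.ofAdd 1) from rfl, ← map_zpow,
    ofAdd_one_zpow]

/-- Convolution with `q0`, as a monoid hom on `PZ`. -/
noncomputable def convMulHom : PZ →* PZ where
  toFun p := Multiplicative.ofAdd (conv p.toAdd q0)
  map_one' := by
    show Multiplicative.ofAdd (conv ((1 : PZ)).toAdd q0) = 1
    have h : conv ((1 : PZ)).toAdd q0 = 0 := congrArg AddMonoidAlgebra.coeff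
      (zero_mul (AddMonoidAlgebra.ofCoeff q0 : AddMonoidAlgebra ℤ ℤ))
    rw [h]
    rfl
  map_mul' p q := by
    show Multiplicative.ofAdd (conv ((p * q)).toAdd q0) =
      Multiplicative.ofAdd (conv p.toAdd q0) * Multiplicative.ofAdd (conv q.toAdd q0)
    have h : conv ((p * q).toAdd) q0 = conv p.toAdd q0 + conv q.toAdd q0 :=
      congrArg AddMonoidAlgebra.coeff (add_mul (AddMonoidAlgebra.ofCoeff p.toAdd)
        (AddMonoidAlgebra.ofCoeff q.toAdd) (AddMonoidAlgebra.ofCoeff q0 : AddMonoidAlgebra ℤ ℤ))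
    rw [h]
    rfl

theorem psi_injective (hQ : derivedSeries Q 2 = ⊥) (u v : Q) (χ : Q →* ZwrZ)
    (hu : χ u = bZ) (hv : χ v = aZ) : Function.Injective (psi hQ u v) := by
  set K : ZwrZ →* ZwrZ := χ.comp (psi hQ u v) with hK
  have hKinr : ∀ g : Mℤ, K (SemidirectProduct.inr g) = SemidirectProduct.inr g := by
    intro g
    rw [hK, MonoidHom.comp_apply, psi, SemidirectProduct.lift_inr]
    rw [show phi2 u g = u ^ g.toAdd from rfl, map_zpow, hu, bZ_zpow, ofAdd_toAdd]
  have hKinl : ∀ p : PZ, K (SemidirectProduct.inl (eW p)) =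
      SemidirectProduct.inl (eW (Multiplicative.ofAdd (conv p.toAdd q0))) := by
    have hhom : (K.comp ((SemidirectProduct.inl : WZ →* ZwrZ).comp eW.toMonoidHom)) =
        ((SemidirectProduct.inl : WZ →* ZwrZ).comp eW.toMonoidHom).comp convMulHom := by
      apply mhom_ext
      intro n
      have lhs1 : K (SemidirectProduct.inl (eW (Multiplicative.ofAdd (Finsupp.single n 1)))) =
          χ (psiP hQ u v (Multiplicative.ofAdd (Finsupp.single n 1))) := by
        rw [hK, MonoidHom.comp_apply, psi, SemidirectProduct.lift_inl, phi1_eW]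
      have lhs2 : χ (psiP hQ u v (Multiplicative.ofAdd (Finsupp.single n 1))) =
          bZ ^ (-n) * ⁅bZ, aZ⁆ * bZ ^ n := by
        rw [psiP_single, cA_coe, map_mul, map_mul, map_zpow, map_zpow, hu,
          map_commutatorElement, hu, hv]
      have lhs3 : bZ ^ (-n) * ⁅bZ, aZ⁆ * bZ ^ n =
          SemidirectProduct.inl (eW (Multiplicative.ofAdd (conv (Finsupp.single n 1) q0))) := by
        rw [commutator_bZ_aZ, bZ_zpow, bZ_zpow]
        have haut := SemidirectProduct.inl_aut (φ := wreathAction Mℤ Mℤ)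
          (Multiplicative.ofAdd (-n)) (eW (Multiplicative.ofAdd q0))
        have hinr : (SemidirectProduct.inr ((Multiplicative.ofAdd (-n))⁻¹) : ZwrZ) =
            SemidirectProduct.inr (Multiplicative.ofAdd n) := by
          congr 1
          apply Multiplicative.toAdd.injective
          simp
        rw [hinr] at haut
        rw [← haut, act_eW]
        simp
      show K (SemidirectProduct.inl (eW (Multiplicative.ofAdd (Finsupp.single n 1)))) = _
      rw [lhs1, lhs2, lhs3]
      rfl
    intro p
    have h2 := DFunLike.congr_fun hhom p
    exact h2
  -- now show K injective, hence psi injective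
  have hKinj : Function.Injective K := by
    rw [injective_iff_map_eq_one]
    intro x hx
    have hxsplit : x = SemidirectProduct.inl x.left * SemidirectProduct.inr x.right :=
      (SemidirectProduct.inl_left_mul_inr_right x).symm
    have hxleft : x.left = eW (eW.symm x.left) := (eW.apply_symm_apply _).symm
    have hKx : K x = SemidirectProduct.inl
        (eW (Multiplicative.ofAdd (conv (eW.symm x.left).toAdd q0))) *
        SemidirectProduct.inr x.right := by
      conv_lhs => rw [hxsplit, hxleft]
      rw [map_mul, hKinl, hKinr]
    have hright : x.right = 1 := by
      have := congrArg SemidirectProduct.rightHom hx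
      rw [hKx] at this
      simpa using this
    have hleft1 : SemidirectProduct.inl
        (eW (Multiplicative.ofAdd (conv (eW.symm x.left).toAdd q0))) = (1 : ZwrZ) := by
      rw [← hx, hKx, hright]
      simp
    have hconv : conv (eW.symm x.left).toAdd q0 = 0 := by
      have h1 : eW (Multiplicative.ofAdd (conv (eW.symm x.left).toAdd q0)) = 1 :=
        SemidirectProduct.inl_injective (by simpa using hleft1)
      have h2 : (Multiplicative.ofAdd (conv (eW.symm x.left).toAdd q0) : PZ) = 1 :=
        eW.injective (by simpa using h1)
      simpa using congrArg Multiplicative.toAdd h2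
    have hp : (eW.symm x.left).toAdd = 0 := conv_eq_zero q0_ne_zero hconv
    have hxl : x.left = 1 := by
      have : eW.symm x.left = 1 := by
        apply Multiplicative.toAdd.injective
        simpa using hp
      have := congrArg eW this
      rwa [eW.apply_symm_apply, map_one] at this
    rw [hxsplit, hxl, hright, map_one, map_one, one_mul]
  exact Function.Injective.of_comp (f := χ) hKinj

end Injectivity

section FreeGroups

open Multiplicative

/-- A free group with at most one generator is solvable. -/
theorem isSolvable_of_gens_subsingleton (G : Type*) [Group G] [IsFreeGroup G]
    (h : ∀ a b : IsFreeGroup.Generators G, a = b) : IsSolvable G := by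
  have hfree : IsSolvable (FreeGroup (IsFreeGroup.Generators G)) := by
    apply isSolvable_of_comm
    intro x y
    rcases isEmpty_or_nonempty (IsFreeGroup.Generators G) with hempty | hne
    · have h1 : ∀ z : FreeGroup (IsFreeGroup.Generators G), z = 1 := by
        intro z
        induction z using FreeGroup.induction_on with
        | C1 => rfl
        | of a => exact isEmptyElim a
        | inv_of a ih => rw [ih, inv_one]
        | mul a b iha ihb => rw [iha, ihb, one_mul]
      rw [h1 x, h1 y]
    · obtain ⟨a⟩ := hne
      have hz : ∀ z : FreeGroup (IsFreeGroup.Generators G),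
          z ∈ Subgroup.zpowers (pure a : FreeGroup (IsFreeGroup.Generators G)) := by
        intro z
        induction z using FreeGroup.induction_on with
        | C1 => exact Subgroup.one_mem _
        | of b => rw [h b a]; exact Subgroup.mem_zpowers _
        | inv_of b ih => exact Subgroup.inv_mem _ ih
        | mul b c ihb ihc => exact Subgroup.mul_mem _ ihb ihc
      obtain ⟨m, hm⟩ := hz x
      obtain ⟨k, hk⟩ := hz y
      rw [← hm, ← hk]
      exact ((Commute.refl _).zpow_zpow m k).eq
  haveI : Group.IsSolvable (FreeGroup (IsFreeGroup.Generators G)) := hfree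
  exact solvable_of_surjective (f := (IsFreeGroup.mulEquiv G).toMonoidHom)
    ((IsFreeGroup.mulEquiv G).surjective)

/-- The base case: the free metabelian quotient contains `ℤ wr ℤ`. -/
theorem exists_injective_two (G : Type*) [Group G] [IsFreeGroup G] (hns : ¬IsSolvable G) :
    ∃ f : ZwrZ →* G ⧸ derivedSeries G 2, Function.Injective f := by
  classical
  have hex : ∃ a b : IsFreeGroup.Generators G, a ≠ b := by
    by_contra hcon
    push_neg at hcon
    exact hns (isSolvable_of_gens_subsingleton G hcon)
  obtain ⟨gx, gy, hxy⟩ := hex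
  set N : Subgroup G := derivedSeries G 2 with hN
  haveI : N.Normal := derivedSeries_normal _ _
  have hQ2 : derivedSeries (G ⧸ N) 2 = ⊥ := by
    rw [← map_derivedSeries_eq (QuotientGroup.mk'_surjective N) 2]
    rw [eq_bot_iff]
    rintro x ⟨y, hy, rfl⟩
    rw [Subgroup.mem_bot]
    exact (QuotientGroup.eq_one_iff y).mpr hy
  let θ : G →* ZwrZ := IsFreeGroup.lift (fun s => if s = gx then bZ else if s = gy then aZ else 1)
  have hθx : θ (IsFreeGroup.of gx) = bZ := by
    rw [show θ (IsFreeGroup.of gx) = _ from IsFreeGroup.lift_of _ gx, if_pos rfl]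
  have hθy : θ (IsFreeGroup.of gy) = aZ := by
    rw [show θ (IsFreeGroup.of gy) = _ from IsFreeGroup.lift_of _ gy,
      if_neg (fun hc => hxy hc.symm), if_pos rfl]
  have hker : N ≤ θ.ker := by
    intro x hx
    have hmem : θ x ∈ (derivedSeries G 2).map θ := ⟨x, hx, rfl⟩
    have h2 := map_derivedSeries_le_derivedSeries θ 2 hmem
    rw [derivedSeries_ZwrZ_two, Subgroup.mem_bot] at h2
    exact h2
  let χ : (G ⧸ N) →* ZwrZ := QuotientGroup.lift N θ hker
  refine ⟨psi hQ2 (QuotientGroup.mk' N (IsFreeGroup.of gx))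
    (QuotientGroup.mk' N (IsFreeGroup.of gy)),
    psi_injective hQ2 _ _ χ ?_ ?_⟩
  · rw [show χ (QuotientGroup.mk' N (IsFreeGroup.of gx)) = θ (IsFreeGroup.of gx) from rfl, hθx]
  · rw [show χ (QuotientGroup.mk' N (IsFreeGroup.of gy)) = θ (IsFreeGroup.of gy) from rfl, hθy]

theorem map_subtype_derivedSeries (G : Type*) [Group G] (n : ℕ) :
    (derivedSeries ↥(derivedSeries G 1) n).map (derivedSeries G 1).subtype =
      derivedSeries G (n + 1) := by
  induction n with
  | zero =>
    rw [show derivedSeries ↥(derivedSeries G 1) 0 = ⊤ from rfl]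
    rw [← MonoidHom.range_eq_map, Subgroup.range_subtype]
  | succ n ih =>
    have h1 : derivedSeries ↥(derivedSeries G 1) (n + 1) =
        ⁅derivedSeries ↥(derivedSeries G 1) n, derivedSeries ↥(derivedSeries G 1) n⁆ :=
      derivedSeries_succ _ n
    have h2 : derivedSeries G (n + 1 + 1) = ⁅derivedSeries G (n + 1), derivedSeries G (n + 1)⁆ :=
      derivedSeries_succ _ (n + 1)
    rw [h1, Subgroup.map_commutator, ih, h2]

universe u

theorem exists_injective_all (m : ℕ) : ∀ (G : Type u) [Group G] [IsFreeGroup G],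
    ¬IsSolvable G → ∃ f : ZwrZ →* G ⧸ derivedSeries G (m + 2), Function.Injective f := by
  induction m with
  | zero => exact fun G _ _ hns => exists_injective_two G hns
  | succ m ih =>
    intro G _ _ hns
    set H : Subgroup G := derivedSeries G 1 with hH
    have hnsH : ¬IsSolvable ↥H := by
      intro hs
      obtain ⟨n, hn⟩ := (isSolvable_def _).mp hs
      refine hns ((isSolvable_def _).mpr ⟨n + 1, ?_⟩)
      rw [← map_subtype_derivedSeries G n, hn, Subgroup.map_bot]
    obtain ⟨f, hf⟩ := ih ↥H hnsH
    let θ : ↥H →* G ⧸ derivedSeries G (m + 1 + 2) := (QuotientGroup.mk' _).comp H.subtype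
    have hkerθ : θ.ker = derivedSeries ↥H (m + 2) := by
      have h1 : derivedSeries G (m + 1 + 2) = (derivedSeries ↥H (m + 2)).map H.subtype :=
        (map_subtype_derivedSeries G (m + 2)).symm
      have h2 : θ.ker = (derivedSeries G (m + 1 + 2)).comap H.subtype := by
        ext x
        rw [MonoidHom.mem_ker, Subgroup.mem_comap]
        exact QuotientGroup.eq_one_iff _
      rw [h2, h1, Subgroup.comap_map_eq_self_of_injective (Subgroup.subtype_injective H)]
    let j : (↥H ⧸ derivedSeries ↥H (m + 2)) →* G ⧸ derivedSeries G (m + 1 + 2) :=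
      QuotientGroup.lift _ θ (fun x hx => by
        rw [hkerθ]; exact hx)
    have hj : Function.Injective j := by
      rw [injective_iff_map_eq_one]
      intro z
      refine QuotientGroup.induction_on z ?_
      intro x hx1
      have hx2 : θ x = 1 := hx1
      rw [← MonoidHom.mem_ker, hkerθ] at hx2
      exact (QuotientGroup.eq_one_iff x).mpr hx2
    exact ⟨j.comp f, hj.comp hf⟩

theorem freeGroup_fin_not_solvable (k : ℕ) (hk : 2 ≤ k) : ¬IsSolvable (FreeGroup (Fin k)) := by
  intro hs
  set σ : Equiv.Perm (Fin 5) := finRotate 5 with hσ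
  set τ : Equiv.Perm (Fin 5) := Equiv.swap 0 (σ 0) with hτ
  have hgen : Subgroup.closure {σ, τ} = ⊤ :=
    Equiv.Perm.closure_cycle_adjacent_swap (isCycle_finRotate (n := 3)) (support_finRotate (n := 3)) 0
  let f : FreeGroup (Fin k) →* Equiv.Perm (Fin 5) :=
    FreeGroup.lift (fun i => if (i : ℕ) = 0 then σ else if (i : ℕ) = 1 then τ else 1)
  have hsurj : Function.Surjective f := by
    rw [← MonoidHom.range_eq_top]
    rw [eq_top_iff, ← hgen, Subgroup.closure_le]
    intro x hx
    rcases hx with rfl | hx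
    · exact ⟨FreeGroup.of ⟨0, by omega⟩, by simp [f]⟩
    · rw [Set.mem_singleton_iff] at hx
      subst hx
      exact ⟨FreeGroup.of ⟨1, by omega⟩, by simp [f]⟩
  haveI : Group.IsSolvable (FreeGroup (Fin k)) := hs
  exact Equiv.Perm.fin_5_not_solvable (solvable_of_surjective hsurj)

end FreeGroups

/-- For `k ≥ 2` and `l ≥ 2`, the free solvable group `S_{k,l}` contains a
subgroup isomorphic to `ℤ wr ℤ`. -/
theorem statement9 (k l : ℕ) (hk : 2 ≤ k) (hl : 2 ≤ l) :
    ∃ H : Subgroup (FreeSolvable k l), Nonempty (H ≃* ZwrZ) := by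
  have hns := freeGroup_fin_not_solvable k hk
  have hl2 : l - 2 + 2 = l := by omega
  have hex := exists_injective_all (l - 2) (FreeGroup (Fin k)) hns
  rw [hl2] at hex
  obtain ⟨f, hf⟩ := hex
  exact ⟨f.range, ⟨(MonoidHom.ofInjective hf).symm⟩⟩

end DistortionPaper
end

section
/- Let h ∈ ℤ[x] be a polynomial with nonzero constant term, let w = h(x)a ∈ W, and let H = ⟨b, w⟩ be the corresponding exemplary subgroup of ℤ wr ℤ, with generating set {b, w} for H and the standard generating set {a, b} for ℤ wr ℤ. Then the polynomial distortion of h and the subgroup distortion of H are equivalent: Δ_h(l) ≈ Δ_H^{ℤ wr ℤ}(l). -/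
open scoped Pointwise

namespace DistortionPaper

/-- `S(f)`: the sum of the absolute values of the coefficients of `f`. -/
def polyS (f : Polynomial ℤ) : ℕ := ∑ i ∈ f.support, (f.coeff i).natAbs

/-- The distortion function of a polynomial `h ∈ ℤ[x]`:
`Δ_h(l) = sup { S(f) : deg f ≤ l, S(hf) ≤ l }`. -/
noncomputable def polyDistortion (h : Polynomial ℤ) (l : ℕ) : ℕ :=
  sSup {n | ∃ f : Polynomial ℤ, f.natDegree ≤ l ∧ polyS (h * f) ≤ l ∧ polyS f = n}

/-- The element `h(x)a = Σ_j d_j (bʲ a b⁻ʲ)` of the base group of `ℤ wr ℤ`, for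
`h(x) = Σ_j d_j xʲ ∈ ℤ[x]`. -/
noncomputable def polyElem (h : Polynomial ℤ) : WreathBase Mℤ Mℤ :=
  ∏ j ∈ h.support,
    (wreathAction Mℤ Mℤ (Multiplicative.ofAdd (j : ℤ))
        (toBase Mℤ Mℤ (Multiplicative.ofAdd 1))) ^ (h.coeff j)

/-- The element `w = h(x)a` of `ℤ wr ℤ`. -/
noncomputable def wPoly (h : Polynomial ℤ) : ZwrZ := SemidirectProduct.inl (polyElem h)

/-- The exemplary subgroup `H = ⟨b, h(x)a⟩` of `ℤ wr ℤ` associated with `h ∈ ℤ[x]`. -/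
noncomputable def exemplary (h : Polynomial ℤ) : Subgroup ZwrZ :=
  Subgroup.closure {bZ, wPoly h}

/-- The generating set `{b, w}` of the exemplary subgroup. -/
noncomputable def exemplaryGens (h : Polynomial ℤ) : Set ↥(exemplary h) :=
  {⟨bZ, Subgroup.subset_closure (Set.mem_insert _ _)⟩,
   ⟨wPoly h, Subgroup.subset_closure (Set.mem_insert_iff.mpr (Or.inr rfl))⟩}




section Rep
variable {G : Type*} [Group G] (T : Set G)

def Rep (g : G) (n : ℕ) : Prop :=
  ∃ L : List G, (∀ x ∈ L, x ∈ T ∪ T⁻¹) ∧ L.length = n ∧ L.prod = g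

variable {T}

lemma wordLength_def (g : G) : wordLength T g = sInf {n | Rep T g n} := by
  unfold wordLength Rep
  congr 1
  ext n
  constructor
  · rintro ⟨f, hf, hp⟩
    exact ⟨List.ofFn f, by simpa using fun i => hf i, by simp, hp⟩
  · rintro ⟨L, hL, hlen, hp⟩
    subst hlen
    refine ⟨L.get, fun i => hL _ (L.get_mem _), by simpa using hp⟩

lemma Rep.one : Rep T (1 : G) 0 := ⟨[], by simp, rfl, rfl⟩

lemma Rep.single {g : G} (hg : g ∈ T ∪ T⁻¹) : Rep T g 1 :=
  ⟨[g], by simpa using hg, rfl, by simp⟩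

lemma Rep.mul {g g' : G} {n n' : ℕ} (h : Rep T g n) (h' : Rep T g' n') :
    Rep T (g * g') (n + n') := by
  obtain ⟨L, hL, hlen, hp⟩ := h
  obtain ⟨L', hL', hlen', hp'⟩ := h'
  refine ⟨L ++ L', ?_, by simp [hlen, hlen'], by simp [hp, hp']⟩
  intro x hx
  rcases List.mem_append.1 hx with hx | hx
  exacts [hL x hx, hL' x hx]

lemma mem_symm_inv {g : G} (hg : g ∈ T ∪ T⁻¹) : g⁻¹ ∈ T ∪ T⁻¹ := by
  rcases hg with hg | hg
  · exact Or.inr (by simpa using hg)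
  · exact Or.inl (by simpa using hg)

lemma Rep.inv {g : G} {n : ℕ} (h : Rep T g n) : Rep T g⁻¹ n := by
  obtain ⟨L, hL, hlen, hp⟩ := h
  refine ⟨(L.map Inv.inv).reverse, ?_, by simp [hlen], ?_⟩
  · intro x hx
    simp only [List.mem_reverse, List.mem_map] at hx
    obtain ⟨y, hy, rfl⟩ := hx
    exact mem_symm_inv (hL y hy)
  · rw [← List.prod_inv_reverse, hp]

lemma Rep.pow {g : G} {n : ℕ} (h : Rep T g n) (k : ℕ) : Rep T (g ^ k) (k * n) := by
  induction k with
  | zero => simpa using Rep.one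
  | succ k ih =>
      have := ih.mul h
      rw [← pow_succ] at this
      simpa [Nat.succ_mul] using this

lemma Rep.zpow {g : G} {n : ℕ} (h : Rep T g n) (k : ℤ) : Rep T (g ^ k) (k.natAbs * n) := by
  rcases Int.natAbs_eq k with hk | hk
  · rw [hk, zpow_natCast]; exact h.pow _
  · rw [hk, Int.natAbs_neg, Int.natAbs_natCast, zpow_neg, zpow_natCast]
    exact (h.pow k.natAbs).inv

lemma wordLength_le_of_rep {g : G} {n : ℕ} (h : Rep T g n) : wordLength T g ≤ n := by
  rw [wordLength_def]; exact Nat.sInf_le h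

lemma rep_wordLength {g : G} (h : ∃ n, Rep T g n) : Rep T g (wordLength T g) := by
  rw [wordLength_def]; exact Nat.sInf_mem h

end Rep

instance : CoeFun (AddMonoidAlgebra ℤ ℤ) (fun _ => ℤ → ℤ) := ⟨fun c => c.coeff⟩

instance : Coe (AddMonoidAlgebra ℤ ℤ) (ℤ →₀ ℤ) := ⟨fun c => c.coeff⟩


/-- Sum of absolute values of a finitely supported `ℤ → ℤ`. -/
def S1 (c : ℤ →₀ ℤ) : ℕ := ∑ i ∈ c.support, (c i).natAbs

lemma S1_eq_sum_of_superset {c : ℤ →₀ ℤ} {s : Finset ℤ} (h : c.support ⊆ s) :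
    S1 c = ∑ i ∈ s, (c i).natAbs := by
  refine Finset.sum_subset h fun i _ hi => ?_
  simp [Finsupp.notMem_support_iff.1 hi]

@[simp] lemma S1_zero : S1 0 = 0 := by simp [S1]

lemma S1_add_le (c d : ℤ →₀ ℤ) : S1 (c + d) ≤ S1 c + S1 d := by
  rw [S1_eq_sum_of_superset (Finsupp.support_add (g₁ := c) (g₂ := d)),
    S1_eq_sum_of_superset (Finset.subset_union_left (s₂ := d.support)),
    S1_eq_sum_of_superset (Finset.subset_union_right (s₁ := c.support)),
    ← Finset.sum_add_distrib]
  refine Finset.sum_le_sum fun i _ => ?_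
  exact Int.natAbs_add_le (c i) (d i)

@[simp] lemma S1_single (m k : ℤ) : S1 (Finsupp.single m k) = k.natAbs := by
  rcases eq_or_ne k 0 with rfl | hk
  · simp
  · rw [S1, Finsupp.support_single_ne_zero _ hk, Finset.sum_singleton,
      Finsupp.single_eq_same]

@[simp] lemma S1_neg (c : ℤ →₀ ℤ) : S1 (-c) = S1 c := by
  rw [S1, Finsupp.support_neg]
  simp [S1]

lemma S1_mapDomain {f : ℤ → ℤ} (hf : Function.Injective f) (c : ℤ →₀ ℤ) :
    S1 (Finsupp.mapDomain f c) = S1 c := by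
  classical
  rw [S1, S1, Finsupp.mapDomain_support_of_injective hf]
  rw [Finset.sum_image (fun a _ b _ hab => hf hab)]
  refine Finset.sum_congr rfl fun i _ => ?_
  rw [Finsupp.mapDomain_apply hf]

lemma S1_equivMapDomain (e : ℤ ≃ ℤ) (c : ℤ →₀ ℤ) :
    S1 (Finsupp.equivMapDomain e c) = S1 c := by
  rw [Finsupp.equivMapDomain_eq_mapDomain, S1_mapDomain e.injective]

lemma natAbs_apply_le_S1 (c : ℤ →₀ ℤ) (m : ℤ) : (c m).natAbs ≤ S1 c := by
  rcases eq_or_ne (c m) 0 with h | h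
  · simp [h]
  · exact Finset.single_le_sum (f := fun i => (c i).natAbs) (fun i _ => Nat.zero_le _)
      (Finsupp.mem_support_iff.2 h)

section Beta

open Multiplicative LaurentPolynomial

/-- The base-group element corresponding to a finitely supported `ℤ → ℤ`. -/
noncomputable def beta (c : AddMonoidAlgebra ℤ ℤ) : WreathBase Mℤ Mℤ :=
  ⟨fun x => Multiplicative.ofAdd (c x.toAdd), by
    have h : Function.mulSupport (fun x : Mℤ => Multiplicative.ofAdd (c x.toAdd))
        ⊆ (fun x : Mℤ => x.toAdd) ⁻¹' ((c.coeff.support : Finset ℤ) : Set ℤ) := by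
      intro x hx
      simp only [Function.mem_mulSupport] at hx
      have h1 : c x.toAdd ≠ 0 := by
        intro h0
        exact hx (by show Multiplicative.ofAdd (c x.toAdd) = 1; rw [h0]; rfl)
      exact Set.mem_preimage.2 (Finset.mem_coe.2 (Finsupp.mem_support_iff.2 h1))
    exact (Set.Finite.preimage (Set.injOn_of_injective (fun a b hab => hab))
      (Finset.finite_toSet _)).subset h⟩

@[simp] lemma beta_apply (c : AddMonoidAlgebra ℤ ℤ) (x : Mℤ) :
    (beta c : Mℤ → Mℤ) x = Multiplicative.ofAdd (c x.toAdd) := rfl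

lemma beta_add (c d : AddMonoidAlgebra ℤ ℤ) : beta (c + d) = beta c * beta d := by
  refine Subtype.ext (funext fun x => ?_)
  show Multiplicative.ofAdd ((c + d) x.toAdd)
      = Multiplicative.ofAdd (c x.toAdd) * Multiplicative.ofAdd (d x.toAdd)
  rw [AddMonoidAlgebra.coeff_add, Finsupp.add_apply, ofAdd_add]

@[simp] lemma beta_zero : beta 0 = 1 := by
  refine Subtype.ext (funext fun x => ?_)
  show Multiplicative.ofAdd ((0 : AddMonoidAlgebra ℤ ℤ) x.toAdd) = 1
  simp

lemma beta_neg (c : AddMonoidAlgebra ℤ ℤ) : beta (-c) = (beta c)⁻¹ := by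
  refine Subtype.ext (funext fun x => ?_)
  show Multiplicative.ofAdd ((-c : AddMonoidAlgebra ℤ ℤ) x.toAdd) = ((beta c : Mℤ → Mℤ) x)⁻¹
  rw [AddMonoidAlgebra.coeff_neg, Finsupp.neg_apply, ofAdd_neg]
  rfl

lemma beta_injective : Function.Injective beta := by
  intro c d h
  ext m
  have := congrFun (congrArg (Subtype.val) h) (Multiplicative.ofAdd m)
  simpa using this

lemma beta_sum {α : Type*} (s : Finset α) (f : α → AddMonoidAlgebra ℤ ℤ) :
    beta (∑ i ∈ s, f i) = ∏ i ∈ s, beta (f i) := by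
  classical
  induction s using Finset.induction_on with
  | empty => simp
  | insert a s' hx ih =>
                    rw [Finset.sum_insert hx, Finset.prod_insert hx, beta_add, ih]

lemma beta_nsmul (k : ℕ) (c : AddMonoidAlgebra ℤ ℤ) : beta (k • c) = beta c ^ k := by
  induction k with
  | zero => simp
  | succ k ih => rw [succ_nsmul, beta_add, ih, pow_succ]

lemma beta_zsmul (k : ℤ) (c : AddMonoidAlgebra ℤ ℤ) : beta (k • c) = beta c ^ k := by
  rcases Int.natAbs_eq k with hk | hk
  · rw [hk, natCast_zsmul, beta_nsmul, zpow_natCast]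
  · rw [hk, neg_zsmul, natCast_zsmul, beta_neg, beta_nsmul, zpow_neg, zpow_natCast]

lemma T_mul_apply (s m : ℤ) (c : AddMonoidAlgebra ℤ ℤ) :
    (T s * c : AddMonoidAlgebra ℤ ℤ) m = c (-s + m) := by
  have := AddMonoidAlgebra.coeff_single_mul_apply c (1 : ℤ) s m
  exact this.trans (one_mul _)

lemma act_beta (s : ℤ) (c : AddMonoidAlgebra ℤ ℤ) :
    wreathAction Mℤ Mℤ (Multiplicative.ofAdd s) (beta c) = beta (T (-s) * c) := by
  refine Subtype.ext (funext fun x => ?_)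
  show Multiplicative.ofAdd (c (x * Multiplicative.ofAdd s).toAdd)
      = Multiplicative.ofAdd ((T (-s) * c : AddMonoidAlgebra ℤ ℤ) x.toAdd)
  rw [T_mul_apply, toAdd_mul, toAdd_ofAdd, neg_neg, add_comm]

end Beta
section El

open Multiplicative LaurentPolynomial SemidirectProduct

/-- Reflection `x ↦ x⁻¹` on Laurent polynomials. -/
noncomputable def reflL : LaurentPolynomial ℤ ≃ₐ[ℤ] LaurentPolynomial ℤ :=
  AddMonoidAlgebra.domCongr ℤ ℤ (AddEquiv.neg ℤ)

@[simp] lemma reflL_single (m k : ℤ) :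
    reflL (AddMonoidAlgebra.single m k : LaurentPolynomial ℤ) = AddMonoidAlgebra.single (-m) k :=
  AddMonoidAlgebra.domCongr_single (AddEquiv.neg ℤ) m k

@[simp] lemma reflL_apply (c : LaurentPolynomial ℤ) (m : ℤ) : reflL c m = c (-m) :=
  by simp [reflL]

lemma reflL_injective : Function.Injective reflL := reflL.injective

lemma S1_reflL (c : LaurentPolynomial ℤ) : S1 (reflL c) = S1 c := by
  have hs : (reflL c).coeff.support = c.coeff.support.map (AddEquiv.neg ℤ) :=
    AddMonoidAlgebra.domCongr_support (AddEquiv.neg ℤ) c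
  rw [S1, S1, hs, Finset.sum_map]
  refine Finset.sum_congr rfl fun j _ => ?_
  rw [reflL_apply]
  simp

/-- The normal form `inl (β c) * inr (ofAdd t)` of elements of `ℤ wr ℤ`. -/
noncomputable def el (c : AddMonoidAlgebra ℤ ℤ) (t : ℤ) : ZwrZ :=
  SemidirectProduct.inl (beta c) * SemidirectProduct.inr (Multiplicative.ofAdd t)

@[simp] lemma el_left (c : AddMonoidAlgebra ℤ ℤ) (t : ℤ) : (el c t).left = beta c := by
  simp [el]

@[simp] lemma el_right (c : AddMonoidAlgebra ℤ ℤ) (t : ℤ) :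
    (el c t).right = Multiplicative.ofAdd t := by
  simp [el]

lemma el_eq_el {c d : AddMonoidAlgebra ℤ ℤ} {t s : ℤ} (h : el c t = el d s) :
    c = d ∧ t = s := by
  constructor
  · exact beta_injective (by simpa using congrArg SemidirectProduct.left h)
  · simpa using congrArg SemidirectProduct.right h

lemma el_mul (c d : AddMonoidAlgebra ℤ ℤ) (t s : ℤ) :
    el c t * el d s = el (c + T (-t) * d) (t + s) := by
  refine SemidirectProduct.ext ?_ ?_
  · show (el c t).left * wreathAction Mℤ Mℤ (el c t).right (el d s).left = _
    rw [el_left, el_left, el_right, act_beta, ← beta_add, el_left]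
  · show (el c t).right * (el d s).right = _
    rw [el_right, el_right, el_right, ← ofAdd_add]

@[simp] lemma el_zero_zero : el 0 0 = 1 := by
  simp [el]

lemma el_inv (c : AddMonoidAlgebra ℤ ℤ) (t : ℤ) :
    (el c t)⁻¹ = el (-(T t * c : AddMonoidAlgebra ℤ ℤ)) (-t) := by
  refine inv_eq_of_mul_eq_one_right ?_
  rw [el_mul]
  have h1 : (T (-t) * -(T t * c) : AddMonoidAlgebra ℤ ℤ) = -c := by
    rw [mul_neg, ← mul_assoc, ← T_add, neg_add_cancel, T_zero, one_mul]
  rw [h1, add_neg_cancel, add_neg_cancel, el_zero_zero]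

lemma bZ_eq : bZ = el 0 1 := by
  simp [bZ, ofActive, el]

lemma bZ_zpow_s12 (k : ℤ) : bZ ^ k = el 0 k := by
  have : bZ ^ k = SemidirectProduct.inr ((Multiplicative.ofAdd (1:ℤ)) ^ k) := by
    rw [map_zpow]; rfl
  rw [this, ← ofAdd_zsmul]
  simp [el]

lemma toBase_apply (a : Mℤ) (x : Mℤ) :
    (toBase Mℤ Mℤ a : Mℤ → Mℤ) x = if x = 1 then a else 1 := by
  unfold toBase
  by_cases hx : x = (1 : Mℤ) <;> simp [hx]

lemma toBase_eq : toBase Mℤ Mℤ (Multiplicative.ofAdd (1:ℤ)) = beta 1 := by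
  have h1 : (1 : AddMonoidAlgebra ℤ ℤ) = AddMonoidAlgebra.single 0 1 := AddMonoidAlgebra.one_def
  rw [h1]
  refine Subtype.ext (funext fun x => ?_)
  rw [toBase_apply]
  show (if x = (1:Mℤ) then Multiplicative.ofAdd (1:ℤ) else 1)
      = Multiplicative.ofAdd ((AddMonoidAlgebra.single (0:ℤ) (1:ℤ) : AddMonoidAlgebra ℤ ℤ) x.toAdd)
  by_cases hx : x = 1
  · subst hx
    rw [if_pos rfl]
    rw [show Multiplicative.toAdd (1:Mℤ) = 0 from rfl, AddMonoidAlgebra.coeff_single, Finsupp.single_eq_same]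
  · rw [if_neg hx, AddMonoidAlgebra.coeff_single, Finsupp.single_eq_of_ne']
    · rfl
    · intro h0
      exact hx (by simpa using congrArg Multiplicative.ofAdd h0.symm)

lemma aZ_eq : aZ = el 1 0 := by
  rw [aZ, ofPassive, toBase_eq, el]
  simp

lemma toLaurent_eq_sum (p : Polynomial ℤ) :
    Polynomial.toLaurent p
      = ∑ j ∈ p.support, (AddMonoidAlgebra.single (j:ℤ) (p.coeff j) : LaurentPolynomial ℤ) := by
  conv_lhs => rw [Polynomial.as_sum_support p]
  rw [map_sum]
  refine Finset.sum_congr rfl fun j _ => ?_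
  rw [Polynomial.toLaurent_C_mul_T, ← single_eq_C_mul_T]

lemma polyElem_eq (p : Polynomial ℤ) :
    polyElem p = beta (reflL (Polynomial.toLaurent p)) := by
  unfold polyElem
  have h1 : ∀ j ∈ p.support,
      (wreathAction Mℤ Mℤ (Multiplicative.ofAdd (j : ℤ))
        (toBase Mℤ Mℤ (Multiplicative.ofAdd 1))) ^ (p.coeff j)
      = beta (AddMonoidAlgebra.single (-(j:ℤ)) (p.coeff j)) := by
    intro j _
    rw [toBase_eq, act_beta, mul_one, ← beta_zsmul]
    congr 1
    show p.coeff j • (AddMonoidAlgebra.single (-(j:ℤ)) (1:ℤ) : AddMonoidAlgebra ℤ ℤ) = _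
    rw [AddMonoidAlgebra.smul_single, smul_eq_mul, mul_one]
  rw [Finset.prod_congr rfl h1, ← beta_sum]
  congr 1
  rw [toLaurent_eq_sum, map_sum]
  refine Finset.sum_congr rfl fun j _ => ?_
  rw [reflL_single]

lemma wPoly_eq (p : Polynomial ℤ) : wPoly p = el (reflL (Polynomial.toLaurent p)) 0 := by
  rw [wPoly, polyElem_eq, el]
  simp

end El
section Words

open Multiplicative LaurentPolynomial

lemma T_mul_eq_mapDomain (s : ℤ) (c : AddMonoidAlgebra ℤ ℤ) :
    ((T s * c : AddMonoidAlgebra ℤ ℤ) : ℤ →₀ ℤ) = Finsupp.mapDomain (fun m => m + s) c := by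
  ext m
  rw [T_mul_apply]
  have h : m = (m - s) + s := by ring
  rw [h, Finsupp.mapDomain_apply (add_left_injective s)]
  congr 1
  ring

lemma S1_T_mul (s : ℤ) (c : AddMonoidAlgebra ℤ ℤ) :
    S1 (T s * c : AddMonoidAlgebra ℤ ℤ) = S1 c := by
  rw [T_mul_eq_mapDomain, S1_mapDomain (add_left_injective s)]

lemma S1_erase_add (a : ℤ) (c : ℤ →₀ ℤ) :
    S1 c = (c a).natAbs + S1 (c.erase a) := by
  classical
  by_cases ha : a ∈ c.support
  · rw [S1, S1, Finsupp.support_erase, ← Finset.add_sum_erase _ _ ha]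
    congr 1
    refine Finset.sum_congr rfl fun i hi => ?_
    rw [Finsupp.erase_ne (Finset.ne_of_mem_erase hi)]
  · rw [Finsupp.erase_of_notMem_support ha, Finsupp.notMem_support_iff.1 ha]
    simp

lemma S1_single' (m k : ℤ) : S1 (AddMonoidAlgebra.single m k) = k.natAbs :=
  S1_single m k

lemma el_add0 (c d : AddMonoidAlgebra ℤ ℤ) : el (c + d) 0 = el c 0 * el d 0 := by
  rw [el_mul, neg_zero, T_zero, one_mul, add_zero]

lemma el_zpow0 (c : AddMonoidAlgebra ℤ ℤ) (k : ℤ) : (el c 0) ^ k = el (k • c) 0 := by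
  have hn : ∀ n : ℕ, (el c 0) ^ n = el (n • c) 0 := by
    intro n
    induction n with
    | zero => simp
    | succ n ih => rw [pow_succ, ih, ← el_add0, succ_nsmul]
  rcases Int.natAbs_eq k with hk | hk
  · rw [hk, zpow_natCast, hn, natCast_zsmul]
  · rw [hk, zpow_neg, zpow_natCast, hn, el_inv, T_zero, one_mul, neg_zsmul,
      natCast_zsmul, neg_zero]

lemma rep_core (T' : Set ZwrZ) (e : AddMonoidAlgebra ℤ ℤ)
    (ha : ∀ k : ℤ, Rep T' (el (e * AddMonoidAlgebra.single 0 k) 0) k.natAbs)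
    (hb : Rep T' bZ 1) :
    ∀ n : ℕ, ∀ c : AddMonoidAlgebra ℤ ℤ, (∀ m : ℤ, c m ≠ 0 → -(n:ℤ) ≤ m ∧ m ≤ 0) →
      Rep T' (el (e * c) (n:ℤ)) (S1 c + n) := by
  intro n
  induction n with
  | zero =>
      intro c hc
      have hsg : ((AddMonoidAlgebra.single (0:ℤ) (c 0) : AddMonoidAlgebra ℤ ℤ) : ℤ →₀ ℤ)
          = Finsupp.single 0 (c 0) := rfl
      have hc0 : c = AddMonoidAlgebra.single 0 (c 0) := by
        apply AddMonoidAlgebra.coeff_injective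
        rw [hsg]
        ext m
        rcases eq_or_ne m 0 with rfl | hm
        · rw [Finsupp.single_eq_same]
        · rw [Finsupp.single_eq_of_ne' (Ne.symm hm)]
          by_contra hnz
          have := hc m hnz
          omega
      rw [hc0]
      have := ha (c 0)
      have hS : S1 (AddMonoidAlgebra.single (0:ℤ) (c 0)) + (0:ℕ) = (c 0).natAbs := by
        rw [S1_single', add_zero]
      rw [hS, Nat.cast_zero]
      exact this
  | succ n ih =>
      intro c hc
      set c' : AddMonoidAlgebra ℤ ℤ := c.erase 0 with hc'
      set d : AddMonoidAlgebra ℤ ℤ := (T 1 * c' : AddMonoidAlgebra ℤ ℤ) with hd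
      have hc'app : ∀ m : ℤ, (c' : ℤ →₀ ℤ) m = if m = 0 then 0 else c m := by
        intro m
        rcases eq_or_ne m 0 with rfl | hm
        · rw [if_pos rfl, hc', AddMonoidAlgebra.coeff_erase, Finsupp.erase_same]
        · rw [if_neg hm, hc', AddMonoidAlgebra.coeff_erase, Finsupp.erase_ne hm]
      have hdm : ∀ m : ℤ, d m ≠ 0 → -(n:ℤ) ≤ m ∧ m ≤ 0 := by
        intro m hm
        rw [hd, T_mul_apply, hc'app] at hm
        split_ifs at hm with h0
        · exact absurd rfl hm
        · have := hc _ hm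
          push_cast at this ⊢
          omega
      have hT : (T (-1) * (e * d) : AddMonoidAlgebra ℤ ℤ) = e * c' := by
        rw [hd]
        have h2 : (T (-1) * (e * (T 1 * c')) : AddMonoidAlgebra ℤ ℤ)
            = (T (-1) * T 1) * (e * c') := by ring
        rw [h2, ← T_add, neg_add_cancel, T_zero, one_mul]
      have hsplit : e * AddMonoidAlgebra.single 0 (c 0) + e * c' = e * c := by
        rw [← mul_add]
        congr 1
        exact AddMonoidAlgebra.single_add_erase 0 c
      have harg : ((e * AddMonoidAlgebra.single 0 (c 0) + T (-0) * 0)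
          + T (-(0+1)) * (e * d) : AddMonoidAlgebra ℤ ℤ) = e * c := by
        rw [mul_zero, add_zero, show (-(0+1):ℤ) = -1 from by norm_num, hT, hsplit]
      have htim : ((0:ℤ) + 1) + (n:ℤ) = (n:ℤ) + 1 := by omega
      have hprod : el (e * c) ((n:ℤ) + 1)
          = (el (e * AddMonoidAlgebra.single 0 (c 0)) 0 * bZ) * el (e * d) (n:ℤ) := by
        rw [bZ_eq, el_mul, el_mul, harg, htim]
      have hrep := ((ha (c 0)).mul hb).mul (ih d hdm)
      rw [← hprod] at hrep
      have hS : (c 0).natAbs + 1 + (S1 d + n) = S1 c + (n + 1) := by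
        have h1 : S1 d = S1 c' := S1_T_mul 1 c'
        have h2 : S1 c = (c 0).natAbs + S1 c' := S1_erase_add 0 c
        omega
      rw [hS] at hrep
      push_cast
      exact hrep

lemma rep_el (T' : Set ZwrZ) (e : AddMonoidAlgebra ℤ ℤ)
    (ha : ∀ k : ℤ, Rep T' (el (e * AddMonoidAlgebra.single 0 k) 0) k.natAbs)
    (hb : Rep T' bZ 1)
    (c : AddMonoidAlgebra ℤ ℤ) (t A B : ℤ) (hAB : A ≤ B)
    (hsupp : ∀ m : ℤ, c m ≠ 0 → A ≤ m ∧ m ≤ B) :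
    Rep T' (el (e * c) t)
      (B.natAbs + (B - A).toNat + S1 c + (t + A).natAbs) := by
  set n : ℕ := (B - A).toNat with hn
  set c' : AddMonoidAlgebra ℤ ℤ := (T (-B) * c : AddMonoidAlgebra ℤ ℤ) with hc'
  have hnz : (n:ℤ) = B - A := Int.toNat_of_nonneg (by omega)
  have hc'supp : ∀ m : ℤ, c' m ≠ 0 → -(n:ℤ) ≤ m ∧ m ≤ 0 := by
    intro m hm
    rw [hc', T_mul_apply, neg_neg] at hm
    have := hsupp _ hm
    omega
  have hcore := rep_core T' e ha hb n c' hc'supp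
  have hbl := hb.zpow (-B)
  have hbr := hb.zpow (t + A)
  have hrep := (hbl.mul hcore).mul hbr
  have hel : (bZ ^ (-B) * el (e * c') (n:ℤ)) * bZ ^ (t + A) = el (e * c) t := by
    rw [bZ_zpow_s12, bZ_zpow_s12, el_mul, el_mul, mul_zero, add_zero, zero_add]
    have harg : (T (-(-B)) * (e * c') : AddMonoidAlgebra ℤ ℤ) = e * c := by
      rw [hc', neg_neg]
      have h2 : (T B * (e * (T (-B) * c)) : AddMonoidAlgebra ℤ ℤ)
          = (T B * T (-B)) * (e * c) := by ring
      rw [h2, ← T_add, add_neg_cancel, T_zero, one_mul]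
    have htim : (-B + (n:ℤ)) + (t + A) = t := by omega
    rw [harg, htim]
  rw [hel] at hrep
  have hS : S1 c' = S1 c := S1_T_mul (-B) c
  have hB : (-B).natAbs = B.natAbs := Int.natAbs_neg B
  have hcount : (-B).natAbs * 1 + (S1 c' + n) + (t + A).natAbs * 1
      = B.natAbs + (B - A).toNat + S1 c + (t + A).natAbs := by omega
  exact hcount ▸ hrep

lemma wordLength_el_le (T' : Set ZwrZ) (e : AddMonoidAlgebra ℤ ℤ)
    (ha : ∀ k : ℤ, Rep T' (el (e * AddMonoidAlgebra.single 0 k) 0) k.natAbs)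
    (hb : Rep T' bZ 1)
    (c : AddMonoidAlgebra ℤ ℤ) (t A B : ℤ) (hAB : A ≤ B)
    (hsupp : ∀ m : ℤ, c m ≠ 0 → A ≤ m ∧ m ≤ B) :
    wordLength T' (el (e * c) t)
      ≤ B.natAbs + (B - A).toNat + S1 c + (t + A).natAbs :=
  wordLength_le_of_rep (rep_el T' e ha hb c t A B hAB hsupp)

end Words
section NormalForm

open Multiplicative LaurentPolynomial

lemma word_form (e : AddMonoidAlgebra ℤ ℤ) (T' : Set ZwrZ)
    (hT' : ∀ x ∈ T' ∪ T'⁻¹, ∃ ε : ℤ, ε.natAbs ≤ 1 ∧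
      (x = el (e * AddMonoidAlgebra.single 0 ε) 0 ∨ x = el 0 ε)) :
    ∀ L : List ZwrZ, (∀ x ∈ L, x ∈ T' ∪ T'⁻¹) →
      ∃ (q : AddMonoidAlgebra ℤ ℤ) (t : ℤ), L.prod = el (e * q) t ∧ S1 q ≤ L.length ∧
        t.natAbs ≤ L.length ∧ ∀ m : ℤ, q m ≠ 0 → m.natAbs ≤ L.length := by
  intro L
  induction L with
  | nil =>
      intro _
      refine ⟨0, 0, ?_, by simp, by simp, by simp⟩
      rw [List.prod_nil, mul_zero, el_zero_zero]
  | cons x L ih =>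
      intro hx
      obtain ⟨q, t, hprod, hS, ht, hsupp⟩ := ih (fun y hy => hx y (List.mem_cons_of_mem x hy))
      obtain ⟨ε, hε, hcase | hcase⟩ := hT' x (hx x List.mem_cons_self)
      · refine ⟨AddMonoidAlgebra.single 0 ε + q, t, ?_, ?_, ?_, ?_⟩
        · rw [List.prod_cons, hprod, hcase, el_mul, neg_zero, T_zero, one_mul, zero_add,
            ← mul_add]
        · refine le_trans (S1_add_le (AddMonoidAlgebra.single 0 ε : AddMonoidAlgebra ℤ ℤ) q) ?_
          rw [S1_single']
          simp only [List.length_cons]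
          omega
        · simp only [List.length_cons]; omega
        · intro m hm
          rcases eq_or_ne m 0 with rfl | hm0
          · simp
          · have hq : ((AddMonoidAlgebra.single (0:ℤ) ε + q : AddMonoidAlgebra ℤ ℤ) : ℤ →₀ ℤ) m
                = q m := by
              rw [AddMonoidAlgebra.coeff_add, Finsupp.add_apply]
              rw [show (AddMonoidAlgebra.single (0:ℤ) ε : ℤ →₀ ℤ) = Finsupp.single 0 ε from rfl]
              rw [Finsupp.single_eq_of_ne' (Ne.symm hm0), zero_add]
            rw [hq] at hm
            have := hsupp m hm
            simp only [List.length_cons]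
            omega
      · refine ⟨(T (-ε) * q : AddMonoidAlgebra ℤ ℤ), ε + t, ?_, ?_, ?_, ?_⟩
        · rw [List.prod_cons, hprod, hcase, el_mul, zero_add]
          rw [show (T (-ε) * (e * q) : AddMonoidAlgebra ℤ ℤ) = e * (T (-ε) * q) from by ring]
        · rw [S1_T_mul]
          simp only [List.length_cons]
          omega
        · simp only [List.length_cons]
          calc (ε + t).natAbs ≤ ε.natAbs + t.natAbs := Int.natAbs_add_le ε t
            _ ≤ L.length + 1 := by omega
        · intro m hm
          rw [T_mul_apply, neg_neg] at hm
          have := hsupp _ hm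
          simp only [List.length_cons]
          have := Int.natAbs_add_le ε m
          have h3 := Int.natAbs_add_le (ε + m) (-ε)
          simp only [add_neg_cancel_left, Int.natAbs_neg] at h3
          omega

lemma letters_G : ∀ x ∈ ({aZ, bZ} : Set ZwrZ) ∪ ({aZ, bZ} : Set ZwrZ)⁻¹,
    ∃ ε : ℤ, ε.natAbs ≤ 1 ∧
      (x = el ((1 : AddMonoidAlgebra ℤ ℤ) * AddMonoidAlgebra.single 0 ε) 0 ∨ x = el 0 ε) := by
  have hone : ∀ ε : ℤ, ((1 : AddMonoidAlgebra ℤ ℤ) * AddMonoidAlgebra.single 0 ε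
      : AddMonoidAlgebra ℤ ℤ) = AddMonoidAlgebra.single 0 ε := fun ε => one_mul _
  have ha1 : aZ = el (AddMonoidAlgebra.single 0 1) 0 := by
    rw [aZ_eq]
    congr 1
  have hneg : (AddMonoidAlgebra.single (0:ℤ) (-1:ℤ) : AddMonoidAlgebra ℤ ℤ)
      = -(AddMonoidAlgebra.single (0:ℤ) (1:ℤ)) := AddMonoidAlgebra.single_neg 0 1
  have ha2 : aZ⁻¹ = el (AddMonoidAlgebra.single 0 (-1)) 0 := by
    rw [ha1, el_inv, T_zero, one_mul, neg_zero, hneg]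
  intro x hx
  rcases hx with hx | hx
  · rcases hx with rfl | hx
    · exact ⟨1, by norm_num, Or.inl (by rw [hone, ← ha1])⟩
    · rw [Set.mem_singleton_iff] at hx
      subst hx
      exact ⟨1, by norm_num, Or.inr bZ_eq⟩
  · simp only [Set.mem_inv, Set.mem_insert_iff, Set.mem_singleton_iff] at hx
    rcases hx with hx | hx
    · refine ⟨-1, by norm_num, Or.inl ?_⟩
      rw [hone]
      have hxx : x = aZ⁻¹ := by rw [← hx, inv_inv]
      rw [hxx, ha2]
    · refine ⟨-1, by norm_num, Or.inr ?_⟩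
      have hxx : x = bZ⁻¹ := by rw [← hx, inv_inv]
      rw [hxx, bZ_eq, el_inv]
      simp

lemma letters_H (h : Polynomial ℤ) :
    ∀ x ∈ ({bZ, wPoly h} : Set ZwrZ) ∪ ({bZ, wPoly h} : Set ZwrZ)⁻¹,
    ∃ ε : ℤ, ε.natAbs ≤ 1 ∧
      (x = el ((reflL (Polynomial.toLaurent h)) * AddMonoidAlgebra.single 0 ε) 0
        ∨ x = el 0 ε) := by
  set Hc : AddMonoidAlgebra ℤ ℤ := reflL (Polynomial.toLaurent h) with hHc
  have hw1 : wPoly h = el (Hc * AddMonoidAlgebra.single 0 1) 0 := by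
    rw [wPoly_eq]
    congr 1
    rw [show (AddMonoidAlgebra.single (0:ℤ) (1:ℤ)) = (1 : AddMonoidAlgebra ℤ ℤ) from
      AddMonoidAlgebra.one_def.symm, mul_one]
  have hneg : (AddMonoidAlgebra.single (0:ℤ) (-1:ℤ) : AddMonoidAlgebra ℤ ℤ)
      = -(AddMonoidAlgebra.single (0:ℤ) (1:ℤ)) := AddMonoidAlgebra.single_neg 0 1
  have hw2 : (wPoly h)⁻¹ = el (Hc * AddMonoidAlgebra.single 0 (-1)) 0 := by
    rw [hw1, el_inv, T_zero, one_mul, neg_zero, hneg, mul_neg]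
  intro x hx
  rcases hx with hx | hx
  · rcases hx with rfl | hx
    · exact ⟨1, by norm_num, Or.inr bZ_eq⟩
    · rw [Set.mem_singleton_iff] at hx
      subst hx
      exact ⟨1, by norm_num, Or.inl hw1⟩
  · simp only [Set.mem_inv, Set.mem_insert_iff, Set.mem_singleton_iff] at hx
    rcases hx with hx | hx
    · refine ⟨-1, by norm_num, Or.inr ?_⟩
      have hxx : x = bZ⁻¹ := by rw [← hx, inv_inv]
      rw [hxx, bZ_eq, el_inv]
      simp
    · refine ⟨-1, by norm_num, Or.inl ?_⟩
      have hxx : x = (wPoly h)⁻¹ := by rw [← hx, inv_inv]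
      rw [hxx]
      exact hw2

lemma el_mem_exemplary (h : Polynomial ℤ) (q : AddMonoidAlgebra ℤ ℤ) (t : ℤ) :
    el ((reflL (Polynomial.toLaurent h)) * q) t ∈ exemplary h := by
  set Hc : AddMonoidAlgebra ℤ ℤ := reflL (Polynomial.toLaurent h) with hHc
  have hb : bZ ∈ exemplary h := Subgroup.subset_closure (Set.mem_insert _ _)
  have hw : wPoly h ∈ exemplary h :=
    Subgroup.subset_closure (Set.mem_insert_iff.mpr (Or.inr rfl))
  have step1 : ∀ (m k : ℤ), el (Hc * AddMonoidAlgebra.single m k) 0 ∈ exemplary h := by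
    intro m k
    have hconj : bZ ^ (-m) * wPoly h * bZ ^ m = el ((T m * Hc : AddMonoidAlgebra ℤ ℤ)) 0 := by
      rw [bZ_zpow_s12, bZ_zpow_s12, wPoly_eq, ← hHc, el_mul, el_mul, zero_add, mul_zero, add_zero, neg_neg]
      have harg : (-m + 0 + m : ℤ) = 0 := by omega
      rw [harg]
    have hpow : (bZ ^ (-m) * wPoly h * bZ ^ m) ^ k
        = el (Hc * AddMonoidAlgebra.single m k) 0 := by
      rw [hconj, el_zpow0]
      congr 1
      have h1 : (T m : LaurentPolynomial ℤ) = AddMonoidAlgebra.single m 1 := rfl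
      rw [show (k • (T m * Hc) : AddMonoidAlgebra ℤ ℤ) = (k • (T m : LaurentPolynomial ℤ)) * Hc
        from (smul_mul_assoc k _ _).symm, h1]
      rw [show (k • (AddMonoidAlgebra.single m (1:ℤ)) : AddMonoidAlgebra ℤ ℤ)
          = AddMonoidAlgebra.single m k from by
        rw [AddMonoidAlgebra.smul_single, smul_eq_mul, mul_one]]
      exact mul_comm _ _
    rw [← hpow]
    exact zpow_mem (mul_mem (mul_mem (zpow_mem hb _) hw) (zpow_mem hb _)) k
  have step2 : ∀ q : AddMonoidAlgebra ℤ ℤ, el (Hc * q) 0 ∈ exemplary h := by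
    intro q
    induction q using AddMonoidAlgebra.induction with
    | zero =>
        show el (Hc * (0 : AddMonoidAlgebra ℤ ℤ)) 0 ∈ exemplary h
        rw [mul_zero, el_zero_zero]
        exact one_mem _
    | single_add m k f hmf hk ih =>
        show el (Hc * (AddMonoidAlgebra.single m k + (show AddMonoidAlgebra ℤ ℤ from f))) 0 ∈ exemplary h
        rw [mul_add, el_add0]
        exact mul_mem (step1 m k) ih
  have : el (Hc * q) t = el (Hc * q) 0 * bZ ^ t := by
    rw [bZ_zpow_s12, el_mul, mul_zero, add_zero, zero_add]
  rw [this]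
  exact mul_mem (step2 q) (zpow_mem hb t)

end NormalForm
section Finiteness

open Multiplicative LaurentPolynomial

lemma ball_finite_s12 {G : Type*} [Group G] {T : Set G} (hT : (T ∪ T⁻¹).Finite)
    (hgen : ∀ g : G, ∃ n, Rep T g n) (l : ℕ) :
    {g : G | wordLength T g ≤ l}.Finite := by
  classical
  have hsub : {g : G | wordLength T g ≤ l} ⊆
      ⋃ n ∈ Set.Iic l, (fun f : Fin n → G => (List.ofFn f).prod) ''
        (Set.pi Set.univ (fun _ : Fin n => T ∪ T⁻¹)) := by
    intro g hg
    obtain ⟨L, hL, hlen, hprod⟩ := rep_wordLength (hgen g)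
    refine Set.mem_iUnion.2 ⟨L.length, Set.mem_iUnion.2 ⟨?_, ?_⟩⟩
    · rw [hlen]
      exact hg
    · refine ⟨L.get, fun i _ => hL _ (L.get_mem _), ?_⟩
      simpa using hprod
  refine Set.Finite.subset (Set.Finite.biUnion (Set.finite_Iic l) fun n _ => ?_) hsub
  exact Set.Finite.image _ (Set.Finite.pi fun _ => hT)

lemma beta_surjective : Function.Surjective beta := by
  intro u
  have hfin : (Function.support fun m : ℤ => Multiplicative.toAdd ((u : Mℤ → Mℤ)
      (Multiplicative.ofAdd m))).Finite := by
    have hsub : (Function.support fun m : ℤ => Multiplicative.toAdd ((u : Mℤ → Mℤ)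
        (Multiplicative.ofAdd m)))
        ⊆ (fun m : ℤ => Multiplicative.ofAdd m) ⁻¹' (Function.mulSupport (u : Mℤ → Mℤ)) := by
      intro m hm
      simp only [Function.mem_support] at hm
      intro h1
      exact hm (by rw [h1]; rfl)
    exact (Set.Finite.preimage (Set.injOn_of_injective (fun a b hab => hab)) u.2).subset hsub
  refine ⟨AddMonoidAlgebra.ofCoeff (Finsupp.ofSupportFinite _ hfin), ?_⟩
  refine Subtype.ext (funext fun x => ?_)
  show Multiplicative.ofAdd (Finsupp.ofSupportFinite _ hfin x.toAdd) = (u : Mℤ → Mℤ) x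
  rw [show (Finsupp.ofSupportFinite _ hfin) x.toAdd
    = Multiplicative.toAdd ((u : Mℤ → Mℤ) (Multiplicative.ofAdd x.toAdd)) from rfl]
  simp

lemma exists_el (g : ZwrZ) : ∃ (c : AddMonoidAlgebra ℤ ℤ) (t : ℤ), g = el c t := by
  obtain ⟨c, hc⟩ := beta_surjective g.left
  refine ⟨c, Multiplicative.toAdd g.right, ?_⟩
  rw [el, hc]
  simp only [ofAdd_toAdd]
  exact (SemidirectProduct.inl_left_mul_inr_right g).symm

lemma haG : ∀ k : ℤ, Rep ({aZ, bZ} : Set ZwrZ)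
    (el ((1 : AddMonoidAlgebra ℤ ℤ) * AddMonoidAlgebra.single 0 k) 0) k.natAbs := by
  intro k
  have h1 : el ((1 : AddMonoidAlgebra ℤ ℤ) * AddMonoidAlgebra.single 0 k) 0 = aZ ^ k := by
    rw [one_mul, aZ_eq, el_zpow0]
    congr 1
    rw [AddMonoidAlgebra.one_def, AddMonoidAlgebra.smul_single, smul_eq_mul, mul_one]
  rw [h1]
  have := (Rep.single (T := ({aZ, bZ} : Set ZwrZ)) (Or.inl (Set.mem_insert _ _))).zpow k
  simpa using this

lemma hbG : Rep ({aZ, bZ} : Set ZwrZ) bZ 1 :=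
  Rep.single (Or.inl (Set.mem_insert_iff.2 (Or.inr rfl)))

lemma haH (h : Polynomial ℤ) : ∀ k : ℤ, Rep ({bZ, wPoly h} : Set ZwrZ)
    (el ((reflL (Polynomial.toLaurent h)) * AddMonoidAlgebra.single 0 k) 0) k.natAbs := by
  intro k
  have h1 : el ((reflL (Polynomial.toLaurent h)) * AddMonoidAlgebra.single 0 k) 0
      = (wPoly h) ^ k := by
    rw [wPoly_eq, el_zpow0]
    congr 1
    rw [show (AddMonoidAlgebra.single (0:ℤ) k : AddMonoidAlgebra ℤ ℤ)
        = k • (1 : AddMonoidAlgebra ℤ ℤ) from by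
      rw [AddMonoidAlgebra.one_def, AddMonoidAlgebra.smul_single, smul_eq_mul, mul_one]]
    rw [mul_smul_comm, mul_one]
  rw [h1]
  have := (Rep.single (T := ({bZ, wPoly h} : Set ZwrZ))
    (Or.inl (Set.mem_insert_iff.2 (Or.inr rfl)))).zpow k
  simpa using this

lemma hbH (h : Polynomial ℤ) : Rep ({bZ, wPoly h} : Set ZwrZ) bZ 1 :=
  Rep.single (Or.inl (Set.mem_insert _ _))

lemma exists_rep_of_mem_closure {G : Type*} [Group G] {s : Set G} {x : G}
    (hx : x ∈ Subgroup.closure s) : ∃ n, Rep s x n := by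
  have hx' : x ∈ Submonoid.closure (s ∪ s⁻¹) := by
    rw [← Subgroup.closure_toSubmonoid]
    exact hx
  obtain ⟨L, hL, hprod⟩ := Submonoid.exists_list_of_mem_closure hx'
  exact ⟨L.length, L, hL, rfl, hprod⟩

lemma rep_coe {h : Polynomial ℤ} {x : exemplary h} {n : ℕ}
    (hr : Rep (exemplaryGens h) x n) : Rep ({bZ, wPoly h} : Set ZwrZ) (x : ZwrZ) n := by
  obtain ⟨L, hL, hlen, hprod⟩ := hr
  refine ⟨L.map ((exemplary h).subtype), fun y hy => ?_, by simpa using hlen, ?_⟩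
  · simp only [List.mem_map] at hy
    obtain ⟨z, hz, rfl⟩ := hy
    rcases hL z hz with hz' | hz'
    · rcases hz' with rfl | hz'
      · exact Or.inl (Set.mem_insert _ _)
      · rw [Set.mem_singleton_iff] at hz'
        subst hz'
        exact Or.inl (Set.mem_insert_iff.2 (Or.inr rfl))
    · rw [Set.mem_inv] at hz'
      rcases hz' with hz' | hz'
      · refine Or.inr (Set.mem_inv.2 ?_)
        rw [show ((exemplary h).subtype z)⁻¹ = ((exemplary h).subtype z⁻¹) from by simp, hz']
        exact Set.mem_insert _ _
      · rw [Set.mem_singleton_iff] at hz'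
        refine Or.inr (Set.mem_inv.2 ?_)
        rw [show ((exemplary h).subtype z)⁻¹ = ((exemplary h).subtype z⁻¹) from by simp, hz']
        exact Set.mem_insert_iff.2 (Or.inr rfl)
  · rw [List.prod_hom L ((exemplary h).subtype), hprod]
    rfl

lemma rep_sub {h : Polynomial ℤ} {g : ZwrZ} (hg : g ∈ exemplary h) {n : ℕ}
    (hr : Rep ({bZ, wPoly h} : Set ZwrZ) g n) :
    Rep (exemplaryGens h) (⟨g, hg⟩ : exemplary h) n := by
  obtain ⟨L, hL, hlen, hprod⟩ := hr
  have hb : bZ ∈ exemplary h := Subgroup.subset_closure (Set.mem_insert _ _)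
  have hw : wPoly h ∈ exemplary h :=
    Subgroup.subset_closure (Set.mem_insert_iff.mpr (Or.inr rfl))
  have hmem : ∀ x ∈ L, x ∈ exemplary h := by
    intro x hx
    rcases hL x hx with hx' | hx'
    · rcases hx' with rfl | hx'
      · exact hb
      · rw [Set.mem_singleton_iff] at hx'
        subst hx'
        exact hw
    · rw [Set.mem_inv] at hx'
      rcases hx' with hx' | hx'
      · rw [show x = bZ⁻¹ from by rw [← hx', inv_inv]]
        exact inv_mem hb
      · rw [Set.mem_singleton_iff] at hx'
        rw [show x = (wPoly h)⁻¹ from by rw [← hx', inv_inv]]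
        exact inv_mem hw
  refine ⟨L.pmap (fun x hx => (⟨x, hx⟩ : exemplary h)) hmem, ?_, by simp [hlen], ?_⟩
  · intro y hy
    rw [List.mem_pmap] at hy
    obtain ⟨x, hx, rfl⟩ := hy
    rcases hL x hx with hx' | hx'
    · rcases hx' with hx1 | hx1
      · left
        left
        exact Subtype.ext hx1
      · rw [Set.mem_singleton_iff] at hx1
        left
        right
        exact Subtype.ext hx1
    · rw [Set.mem_inv] at hx'
      rcases hx' with hx1 | hx1
      · right
        rw [Set.mem_inv]
        left
        exact Subtype.ext (by simpa using hx1)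
      · rw [Set.mem_singleton_iff] at hx1
        right
        rw [Set.mem_inv]
        right
        exact Subtype.ext (by simpa using hx1)
  · refine Subtype.ext ?_
    have h1 : (((L.pmap (fun x hx => (⟨x, hx⟩ : exemplary h)) hmem).prod : exemplary h) : ZwrZ)
        = ((L.pmap (fun x hx => (⟨x, hx⟩ : exemplary h)) hmem).map
            ((exemplary h).subtype)).prod :=
      (List.prod_hom _ ((exemplary h).subtype)).symm
    have h2 : (L.pmap (fun x hx => (⟨x, hx⟩ : exemplary h)) hmem).map ((exemplary h).subtype)
        = L := by
      rw [List.map_pmap]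
      have h3 := List.pmap_congr_left L (H₁ := hmem) (H₂ := hmem)
        (g := fun (a : ZwrZ) (_ : a ∈ exemplary h) => id a)
        (f := fun (a : ZwrZ) (ha : a ∈ exemplary h) => (exemplary h).subtype ⟨a, ha⟩)
        (fun a _ _ _ => rfl)
      rw [h3, List.pmap_eq_map (f := id) (l := L) hmem, List.map_id]
    rw [h1, h2, hprod]

end Finiteness
section PolyLaurent

open LaurentPolynomial Polynomial

lemma toLaurent_eq_mapDomain (p : Polynomial ℤ) :
    ((Polynomial.toLaurent p : AddMonoidAlgebra ℤ ℤ) : ℤ →₀ ℤ)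
      = Finsupp.mapDomain (Nat.cast : ℕ → ℤ) p.toFinsupp.coeff := rfl

lemma toLaurent_apply_coe (p : Polynomial ℤ) (n : ℕ) :
    (Polynomial.toLaurent p : AddMonoidAlgebra ℤ ℤ) ((n : ℤ)) = p.coeff n := by
  rw [toLaurent_eq_mapDomain, Finsupp.mapDomain_apply Nat.cast_injective]
  rfl

lemma toLaurent_apply_neg (p : Polynomial ℤ) {n : ℤ} (hn : n < 0) :
    (Polynomial.toLaurent p : AddMonoidAlgebra ℤ ℤ) n = 0 := by
  rw [toLaurent_eq_mapDomain, Finsupp.mapDomain_notin_range]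
  rintro ⟨m, rfl⟩
  omega

lemma toLaurent_supp (p : Polynomial ℤ) {m : ℤ}
    (hm : (Polynomial.toLaurent p : AddMonoidAlgebra ℤ ℤ) m ≠ 0) :
    0 ≤ m ∧ m ≤ p.natDegree := by
  have h0 : 0 ≤ m := by
    by_contra hneg
    exact hm (toLaurent_apply_neg p (by omega))
  refine ⟨h0, ?_⟩
  have hm' : (Polynomial.toLaurent p : AddMonoidAlgebra ℤ ℤ) ((m.toNat : ℤ)) ≠ 0 := by
    rwa [Int.toNat_of_nonneg h0]
  rw [toLaurent_apply_coe] at hm'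
  have := Polynomial.le_natDegree_of_ne_zero hm'
  omega

lemma S1_mapDomain_nat {f : ℕ → ℤ} (hf : Function.Injective f) (c : ℕ →₀ ℤ) :
    S1 (Finsupp.mapDomain f c) = ∑ i ∈ c.support, (c i).natAbs := by
  classical
  rw [S1, Finsupp.mapDomain_support_of_injective hf]
  rw [Finset.sum_image (fun a _ b _ hab => hf hab)]
  refine Finset.sum_congr rfl fun i _ => ?_
  rw [Finsupp.mapDomain_apply hf]

lemma polyS_eq_S1 (p : Polynomial ℤ) : polyS p = S1 (Polynomial.toLaurent p) := by
  rw [toLaurent_eq_mapDomain, S1_mapDomain_nat Nat.cast_injective]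
  rfl

lemma AMA_sum_single (q : AddMonoidAlgebra ℤ ℤ) :
    q = ∑ m ∈ q.coeff.support, AddMonoidAlgebra.single m (q m) :=
  (AddMonoidAlgebra.sum_coeff_single q).symm

lemma exists_toLaurent (d : AddMonoidAlgebra ℤ ℤ) (hd : ∀ m, d m ≠ 0 → 0 ≤ m) :
    ∃ U : Polynomial ℤ, Polynomial.toLaurent U = d := by
  classical
  refine ⟨∑ m ∈ d.coeff.support, Polynomial.C (d m) * Polynomial.X ^ (m.toNat), ?_⟩
  rw [map_sum]
  conv_rhs => rw [AMA_sum_single d]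
  refine Finset.sum_congr rfl fun m hm => ?_
  rw [map_mul, Polynomial.toLaurent_C, Polynomial.toLaurent_X_pow]
  rw [← single_eq_C_mul_T]
  congr 1
  exact Int.toNat_of_nonneg (hd m (Finsupp.mem_support_iff.1 hm))

lemma reflL_reflL (x : LaurentPolynomial ℤ) : reflL (reflL x) = x := by
  ext m
  rw [reflL_apply, reflL_apply, neg_neg]

lemma T_ne_zero' (n : ℤ) : (T n : LaurentPolynomial ℤ) ≠ 0 := by
  intro h0
  have : (T n : LaurentPolynomial ℤ) n = 0 := by rw [h0]; rfl
  rw [show (T n : LaurentPolynomial ℤ) = AddMonoidAlgebra.single n 1 from rfl,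
    AddMonoidAlgebra.coeff_single, Finsupp.single_eq_same] at this
  exact one_ne_zero this

lemma extract_poly (h : Polynomial ℤ) (h0 : h.coeff 0 ≠ 0) (q : AddMonoidAlgebra ℤ ℤ) (l : ℕ)
    (hS : S1 ((reflL (Polynomial.toLaurent h)) * q : AddMonoidAlgebra ℤ ℤ) ≤ l)
    (hsupp : ∀ m : ℤ, ((reflL (Polynomial.toLaurent h)) * q : AddMonoidAlgebra ℤ ℤ) m ≠ 0 →
      m.natAbs ≤ l) :
    ∃ f : Polynomial ℤ, f.natDegree ≤ 2*l ∧ polyS (h*f) ≤ l ∧ polyS f = S1 q ∧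
      (∀ m : ℤ, q m ≠ 0 → m.natAbs ≤ l) := by
  classical
  have hh : h ≠ 0 := fun hh => h0 (by rw [hh]; simp)
  set Hc : AddMonoidAlgebra ℤ ℤ := reflL (Polynomial.toLaurent h) with hHc
  set c : AddMonoidAlgebra ℤ ℤ := (Hc * q : AddMonoidAlgebra ℤ ℤ) with hc
  set qbar : AddMonoidAlgebra ℤ ℤ := reflL q with hqbar
  have hcbar : reflL c = (Polynomial.toLaurent h * qbar : AddMonoidAlgebra ℤ ℤ) := by
    rw [hc, map_mul, hHc, reflL_reflL, hqbar]
  have hcbar_S : S1 (reflL c) = S1 c := S1_reflL c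
  have hcbar_supp : ∀ m : ℤ, (reflL c) m ≠ 0 → m.natAbs ≤ l := by
    intro m hm
    rw [reflL_apply] at hm
    have := hsupp _ hm
    omega
  set d : AddMonoidAlgebra ℤ ℤ := (T (l:ℤ) * reflL c : AddMonoidAlgebra ℤ ℤ) with hd
  have hdpos : ∀ m, d m ≠ 0 → 0 ≤ m := by
    intro m hm
    rw [hd, T_mul_apply] at hm
    have := hcbar_supp _ hm
    omega
  obtain ⟨U, hU⟩ := exists_toLaurent d hdpos
  obtain ⟨nq, F, hF⟩ := LaurentPolynomial.exists_T_pow qbar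
  have hkey : Polynomial.toLaurent (h * (Polynomial.X ^ l * F))
      = Polynomial.toLaurent (U * Polynomial.X ^ nq) := by
    rw [map_mul, map_mul, map_mul, Polynomial.toLaurent_X_pow, Polynomial.toLaurent_X_pow,
      hF, hU, hd, hcbar]
    ring
  have key := Polynomial.toLaurent_injective hkey
  have hXh : ¬ (Polynomial.X : Polynomial ℤ) ∣ h := fun hdvd => h0 (Polynomial.X_dvd_iff.1 hdvd)
  have hdvd : (Polynomial.X : Polynomial ℤ) ^ nq ∣ Polynomial.X ^ l * F := by
    refine Polynomial.prime_X.pow_dvd_of_dvd_mul_left nq hXh ?_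
    rw [key]
    exact Dvd.intro_left U rfl
  obtain ⟨f, hf⟩ := hdvd
  have hXnq : (Polynomial.X : Polynomial ℤ) ^ nq ≠ 0 := pow_ne_zero _ Polynomial.X_ne_zero
  have hhf : h * f = U := by
    have h1 : Polynomial.X ^ nq * (h * f) = Polynomial.X ^ nq * U := by
      calc Polynomial.X ^ nq * (h * f) = h * (Polynomial.X ^ nq * f) := by ring
        _ = h * (Polynomial.X ^ l * F) := by rw [← hf]
        _ = U * Polynomial.X ^ nq := key
        _ = Polynomial.X ^ nq * U := by ring
    exact mul_left_cancel₀ hXnq h1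
  have hfq : Polynomial.toLaurent f = (T (l:ℤ) * qbar : AddMonoidAlgebra ℤ ℤ) := by
    have h1 : (T (nq:ℤ) : LaurentPolynomial ℤ) * Polynomial.toLaurent f
        = (T (nq:ℤ) : LaurentPolynomial ℤ) * (T (l:ℤ) * qbar : AddMonoidAlgebra ℤ ℤ) := by
      have h2 := congrArg Polynomial.toLaurent hf
      rw [map_mul, map_mul, Polynomial.toLaurent_X_pow, Polynomial.toLaurent_X_pow, hF] at h2
      rw [← h2]
      ring
    exact mul_left_cancel₀ (T_ne_zero' _) h1
  have hSf : polyS f = S1 q := by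
    rw [polyS_eq_S1, hfq, S1_T_mul, hqbar, S1_reflL]
  have hShf : polyS (h * f) ≤ l := by
    rw [hhf, polyS_eq_S1, hU, hd, S1_T_mul, hcbar_S]
    exact hS
  have hUdeg : U.natDegree ≤ 2*l := by
    rw [Polynomial.natDegree_le_iff_coeff_eq_zero]
    intro N hN
    by_contra hc0
    have : (Polynomial.toLaurent U : AddMonoidAlgebra ℤ ℤ) ((N:ℤ)) ≠ 0 := by
      rwa [toLaurent_apply_coe]
    rw [hU, hd, T_mul_apply] at this
    have := hcbar_supp _ this
    omega
  have hdegf : f.natDegree ≤ 2*l := by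
    rcases eq_or_ne f 0 with rfl | hf0
    · simp
    · have := Polynomial.natDegree_mul hh hf0
      have h2 : f.natDegree ≤ (h*f).natDegree := by omega
      rw [hhf] at h2
      omega
  refine ⟨f, hdegf, hShf, hSf, ?_⟩
  intro m hm
  have hqb : qbar (-m) ≠ 0 := by
    rw [hqbar, reflL_apply, neg_neg]
    exact hm
  have hfl : (Polynomial.toLaurent f : AddMonoidAlgebra ℤ ℤ) ((l:ℤ) + -m) ≠ 0 := by
    rw [hfq, T_mul_apply]
    have harg : (-(l:ℤ) + ((l:ℤ) + -m)) = -m := by ring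
    rw [harg]
    exact hqb
  have := toLaurent_supp f hfl
  have := hdegf
  omega

end PolyLaurent
section PolyDist

open Polynomial

lemma natAbs_coeff_le_polyS (p : Polynomial ℤ) (i : ℕ) : (p.coeff i).natAbs ≤ polyS p := by
  rcases eq_or_ne (p.coeff i) 0 with h | h
  · simp [h]
  · exact Finset.single_le_sum (f := fun j => (p.coeff j).natAbs) (fun j _ => Nat.zero_le _)
      (Polynomial.mem_support_iff.2 h)

@[simp] lemma polyS_zero : polyS (0 : Polynomial ℤ) = 0 := by simp [polyS]

lemma polyS_eq_zero {p : Polynomial ℤ} (hp : polyS p = 0) : p = 0 := by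
  ext i
  have := natAbs_coeff_le_polyS p i
  rw [hp, Nat.le_zero, Int.natAbs_eq_zero] at this
  simp [this]

lemma poly_box_finite (D L : ℕ) :
    {u : Polynomial ℤ | u.natDegree ≤ D ∧ ∀ i, (u.coeff i).natAbs ≤ L}.Finite := by
  classical
  set Φ : Polynomial ℤ → (Fin (D+1) → ℤ) := fun u i => u.coeff i with hΦ
  have himg : Φ '' {u : Polynomial ℤ | u.natDegree ≤ D ∧ ∀ i, (u.coeff i).natAbs ≤ L}
      ⊆ Set.pi Set.univ (fun _ : Fin (D+1) => Set.Icc (-(L:ℤ)) (L:ℤ)) := by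
    rintro v ⟨u, ⟨_, hcoeff⟩, rfl⟩
    intro i _
    simp only [hΦ]
    have := hcoeff (i : ℕ)
    rw [Set.mem_Icc]
    omega
  have hfin : (Φ '' {u : Polynomial ℤ | u.natDegree ≤ D ∧ ∀ i, (u.coeff i).natAbs ≤ L}).Finite :=
    Set.Finite.subset (Set.Finite.pi fun _ => Set.finite_Icc _ _) himg
  refine Set.Finite.of_finite_image hfin ?_
  intro u hu u' hu' heq
  obtain ⟨hud, -⟩ := hu
  obtain ⟨hud', -⟩ := hu'
  ext n
  by_cases hn : n ≤ D
  · have := congrFun heq ⟨n, by omega⟩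
    exact this
  · rw [Polynomial.coeff_eq_zero_of_natDegree_lt (by omega : u.natDegree < n),
      Polynomial.coeff_eq_zero_of_natDegree_lt (by omega : u'.natDegree < n)]

lemma polyDist_set_eq (h : Polynomial ℤ) (l : ℕ) :
    {n | ∃ f : Polynomial ℤ, f.natDegree ≤ l ∧ polyS (h * f) ≤ l ∧ polyS f = n}
      = polyS '' {f : Polynomial ℤ | f.natDegree ≤ l ∧ polyS (h * f) ≤ l} := by
  ext n
  constructor
  · rintro ⟨f, h1, h2, h3⟩
    exact ⟨f, ⟨h1, h2⟩, h3⟩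
  · rintro ⟨f, ⟨h1, h2⟩, h3⟩
    exact ⟨f, h1, h2, h3⟩

lemma polyDist_fset_finite (h : Polynomial ℤ) (hh : h ≠ 0) (l : ℕ) :
    {f : Polynomial ℤ | f.natDegree ≤ l ∧ polyS (h * f) ≤ l}.Finite := by
  have hsub : {f : Polynomial ℤ | f.natDegree ≤ l ∧ polyS (h * f) ≤ l}
      ⊆ (fun f => h * f) ⁻¹'
        {u : Polynomial ℤ | u.natDegree ≤ h.natDegree + l ∧ ∀ i, (u.coeff i).natAbs ≤ l} := by
    rintro f ⟨h1, h2⟩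
    refine ⟨le_trans (Polynomial.natDegree_mul_le) (by omega), fun i => ?_⟩
    exact le_trans (natAbs_coeff_le_polyS _ i) h2
  refine Set.Finite.subset (Set.Finite.preimage ?_ (poly_box_finite _ _)) hsub
  exact Set.injOn_of_injective (mul_right_injective₀ hh)

lemma polyDistortion_bddAbove (h : Polynomial ℤ) (hh : h ≠ 0) (l : ℕ) :
    BddAbove {n | ∃ f : Polynomial ℤ, f.natDegree ≤ l ∧ polyS (h * f) ≤ l ∧ polyS f = n} := by
  rw [polyDist_set_eq]
  exact Set.Finite.bddAbove (Set.Finite.image _ (polyDist_fset_finite h hh l))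

lemma zero_mem_polyDist_set (h : Polynomial ℤ) (l : ℕ) :
    (0:ℕ) ∈ {n | ∃ f : Polynomial ℤ, f.natDegree ≤ l ∧ polyS (h * f) ≤ l ∧ polyS f = n} :=
  ⟨0, by simp, by simp, by simp⟩

lemma le_polyDistortion (h : Polynomial ℤ) (hh : h ≠ 0) {f : Polynomial ℤ} {l : ℕ}
    (h1 : f.natDegree ≤ l) (h2 : polyS (h * f) ≤ l) : polyS f ≤ polyDistortion h l :=
  le_csSup (polyDistortion_bddAbove h hh l) ⟨f, h1, h2, rfl⟩

lemma polyDistortion_mono (h : Polynomial ℤ) (hh : h ≠ 0) {l l' : ℕ} (hl : l ≤ l') :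
    polyDistortion h l ≤ polyDistortion h l' := by
  refine csSup_le_csSup (polyDistortion_bddAbove h hh l') ⟨0, zero_mem_polyDist_set h l⟩ ?_
  rintro n ⟨f, h1, h2, h3⟩
  exact ⟨f, by omega, by omega, h3⟩

lemma one_le_polyS (h : Polynomial ℤ) (h0 : h.coeff 0 ≠ 0) : 1 ≤ polyS h := by
  have := natAbs_coeff_le_polyS h 0
  have h1 : (h.coeff 0).natAbs ≠ 0 := fun hz => h0 (Int.natAbs_eq_zero.1 hz)
  omega

lemma polyS_mul_C (h : Polynomial ℤ) {k : ℤ} (hk : k ≠ 0) :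
    polyS (h * Polynomial.C k) = polyS h * k.natAbs := by
  have hsup : (h * Polynomial.C k).support = h.support := by
    ext i
    simp only [Polynomial.mem_support_iff, Polynomial.coeff_mul_C]
    constructor
    · intro hi h0
      exact hi (by rw [h0, zero_mul])
    · intro hi h0
      rcases mul_eq_zero.1 h0 with h1 | h1
      exacts [hi h1, hk h1]
  rw [polyS, hsup, polyS, Finset.sum_mul]
  refine Finset.sum_congr rfl fun i _ => ?_
  rw [Polynomial.coeff_mul_C, Int.natAbs_mul]

lemma le_polyDistortion_linear (h : Polynomial ℤ) (h0 : h.coeff 0 ≠ 0) (l : ℕ) :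
    l ≤ polyDistortion h (polyS h * l) := by
  have hh : h ≠ 0 := fun hh => h0 (by rw [hh]; simp)
  rcases Nat.eq_zero_or_pos l with rfl | hl
  · exact Nat.zero_le _
  have hlz : ((l:ℤ)) ≠ 0 := by omega
  have h1 : (Polynomial.C ((l:ℤ))).natDegree ≤ polyS h * l := by
    rw [Polynomial.natDegree_C]
    exact Nat.zero_le _
  have h2 : polyS (h * Polynomial.C ((l:ℤ))) ≤ polyS h * l := by
    rw [polyS_mul_C h hlz]
    simp
  have h3 : polyS (Polynomial.C ((l:ℤ))) = l := by
    rw [polyS, Polynomial.support_C hlz, Finset.sum_singleton, Polynomial.coeff_C_zero]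
    simp
  have := le_polyDistortion h hh h1 h2
  rw [h3] at this
  exact this

end PolyDist
section Main

open Multiplicative LaurentPolynomial

lemma hgenG : ∀ g : ZwrZ, ∃ n, Rep ({aZ, bZ} : Set ZwrZ) g n := by
  intro g
  obtain ⟨c, t, rfl⟩ := exists_el g
  rcases eq_or_ne c 0 with rfl | hc
  · refine ⟨t.natAbs * 1, ?_⟩
    have := hbG.zpow t
    rwa [bZ_zpow_s12] at this
  · have hne : c.coeff.support.Nonempty :=
      Finsupp.support_nonempty_iff.2 (mt AddMonoidAlgebra.coeff_eq_zero.1 hc)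
    set A := c.coeff.support.min' hne
    set B := c.coeff.support.max' hne
    have hAB : A ≤ B := c.coeff.support.min'_le (c.coeff.support.max' hne) (c.coeff.support.max'_mem hne)
    have hsupp : ∀ m : ℤ, c m ≠ 0 → A ≤ m ∧ m ≤ B := fun m hm =>
      ⟨c.coeff.support.min'_le m (Finsupp.mem_support_iff.2 hm),
       c.coeff.support.le_max' m (Finsupp.mem_support_iff.2 hm)⟩
    have h1 := rep_el ({aZ, bZ} : Set ZwrZ) 1 haG hbG c t A B hAB hsupp
    rw [one_mul] at h1
    exact ⟨_, h1⟩

lemma Tfin : (({aZ, bZ} : Set ZwrZ) ∪ ({aZ, bZ} : Set ZwrZ)⁻¹).Finite :=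
  Set.Finite.union ((Set.finite_singleton bZ).insert aZ)
    (Set.Finite.inv ((Set.finite_singleton bZ).insert aZ))

lemma wordLength_one {G : Type*} [Group G] (T : Set G) : wordLength T (1 : G) = 0 :=
  Nat.le_zero.1 (wordLength_le_of_rep Rep.one)

lemma distortion_img_bdd (h : Polynomial ℤ) (l : ℕ) :
    BddAbove (wordLength (exemplaryGens h) ''
      {x : exemplary h | wordLength ({aZ, bZ} : Set ZwrZ) (x : ZwrZ) ≤ l}) := by
  refine Set.Finite.bddAbove (Set.Finite.image _ ?_)
  have hball := ball_finite_s12 Tfin hgenG l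
  have : {x : exemplary h | wordLength ({aZ, bZ} : Set ZwrZ) (x : ZwrZ) ≤ l}
      = (Subtype.val) ⁻¹' {g : ZwrZ | wordLength ({aZ, bZ} : Set ZwrZ) g ≤ l} := rfl
  rw [this]
  exact Set.Finite.preimage (Set.injOn_of_injective Subtype.val_injective) hball

lemma Hc_ne (h : Polynomial ℤ) (hh : h ≠ 0) : reflL (Polynomial.toLaurent h) ≠ 0 := by
  intro h1
  apply hh
  apply Polynomial.toLaurent_injective
  apply reflL.injective
  rw [h1, map_zero, map_zero]

theorem statement12' (h : Polynomial ℤ) (h0 : h.coeff 0 ≠ 0) :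
    DistEquiv (polyDistortion h)
      (distortion {aZ, bZ} (exemplary h) (exemplaryGens h)) := by
  have hh : h ≠ 0 := fun hh => h0 (by rw [hh]; simp)
  set Hc : AddMonoidAlgebra ℤ ℤ := reflL (Polynomial.toLaurent h) with hHc
  have HcNe : Hc ≠ 0 := Hc_ne h hh
  set T : Set ZwrZ := {aZ, bZ} with hT
  set S : Set (exemplary h) := exemplaryGens h with hSdef
  constructor
  · -- polyDistortion ⪯ distortion
    set C : ℕ := 2 * h.natDegree + 3 with hC
    refine ⟨C, by omega, fun l => ?_⟩
    rw [polyDistortion]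
    refine csSup_le ⟨0, zero_mem_polyDist_set h l⟩ ?_
    rintro n ⟨f, hdeg, hShf, rfl⟩
    rcases Nat.eq_zero_or_pos l with rfl | hl
    · have h1 : polyS (h * f) = 0 := by omega
      have h2 : h * f = 0 := polyS_eq_zero h1
      rcases mul_eq_zero.1 h2 with h3 | h3
      · exact absurd h3 hh
      · rw [h3]
        simp
    · -- main case
      set q0 : AddMonoidAlgebra ℤ ℤ := reflL (Polynomial.toLaurent f) with hq0
      set c : AddMonoidAlgebra ℤ ℤ := reflL (Polynomial.toLaurent (h * f)) with hc
      have hcHq : c = (Hc * q0 : AddMonoidAlgebra ℤ ℤ) := by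
        rw [hc, map_mul, map_mul]
      set g : ZwrZ := el c 0 with hg
      have hmem : g ∈ exemplary h := by
        rw [hg, hcHq]
        exact el_mem_exemplary h q0 0
      have hdeg_hf : (h * f).natDegree ≤ h.natDegree + l :=
        le_trans Polynomial.natDegree_mul_le (by omega)
      have hsuppc : ∀ m : ℤ, c m ≠ 0 → (-((h.natDegree + l : ℕ) : ℤ)) ≤ m ∧ m ≤ 0 := by
        intro m hm
        rw [hc, reflL_apply] at hm
        have h5 := toLaurent_supp _ hm
        have h6 : (h*f).natDegree ≤ h.natDegree + l := hdeg_hf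
        constructor <;> omega
      have hwlT : wordLength T g ≤ C * l := by
        have hb := wordLength_el_le T 1 haG hbG c 0 (-((h.natDegree + l : ℕ) : ℤ)) 0
          (by omega) hsuppc
        rw [one_mul] at hb
        rw [hg]
        refine le_trans hb ?_
        have h1 : ((0:ℤ)).natAbs = 0 := rfl
        have h2 : ((0:ℤ) - (-((h.natDegree + l : ℕ) : ℤ))).toNat = h.natDegree + l := by
          omega
        have h3 : S1 c ≤ l := by
          rw [hc, S1_reflL, ← polyS_eq_S1]
          exact hShf
        have h4 : ((0:ℤ) + (-((h.natDegree + l : ℕ) : ℤ))).natAbs = h.natDegree + l := by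
          omega
        rw [h1, h2, h4]
        calc 0 + (h.natDegree + l) + S1 c + (h.natDegree + l)
            ≤ 2 * h.natDegree + 3 * l := by omega
          _ ≤ C * l := by
              rw [hC]
              nlinarith
      have hmemc : g ∈ Subgroup.closure ({bZ, wPoly h} : Set ZwrZ) := hmem
      obtain ⟨n0, hrep0⟩ := exists_rep_of_mem_closure hmemc
      have hrepS0 : Rep S (⟨g, hmem⟩ : exemplary h) n0 := rep_sub hmem hrep0
      set wlS : ℕ := wordLength S (⟨g, hmem⟩ : exemplary h) with hwlS
      have hrepW : Rep S (⟨g, hmem⟩ : exemplary h) wlS := rep_wordLength ⟨n0, hrepS0⟩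
      have hrepG : Rep ({bZ, wPoly h} : Set ZwrZ) g wlS := rep_coe hrepW
      obtain ⟨L, hL, hlen, hprod⟩ := hrepG
      obtain ⟨q', t', hpq, hSq', _, _⟩ := word_form Hc _ (letters_H h) L hL
      have heq : el (Hc * q0) 0 = el (Hc * q') t' := by
        rw [← hcHq, ← hg, ← hprod, hpq]
      obtain ⟨heq1, -⟩ := el_eq_el heq
      have hq0q' : q0 = q' := mul_left_cancel₀ HcNe heq1
      have hpok : polyS f ≤ wlS := by
        have h1 : polyS f = S1 q0 := by
          rw [hq0, S1_reflL, polyS_eq_S1]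
        rw [h1, hq0q']
        omega
      have hwl_in : wlS ∈ wordLength S '' {x : exemplary h | wordLength T (x : ZwrZ) ≤ C * l} :=
        ⟨⟨g, hmem⟩, hwlT, rfl⟩
      have hfin := le_csSup (distortion_img_bdd h (C * l)) hwl_in
      rw [distortion]
      calc polyS f ≤ wlS := hpok
        _ ≤ sSup (wordLength S '' {x : exemplary h | wordLength T (x : ZwrZ) ≤ C * l}) := hfin
        _ ≤ C * sSup (wordLength S '' {x : exemplary h | wordLength T (x:ZwrZ) ≤ C * l}) :=
            Nat.le_mul_of_pos_left _ (by omega)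
  · -- distortion ⪯ polyDistortion
    set C : ℕ := 6 * (polyS h + 2) with hC
    have hSh1 : 1 ≤ polyS h := one_le_polyS h h0
    refine ⟨C, by omega, fun l => ?_⟩
    rw [distortion]
    refine csSup_le ⟨wordLength S (1 : exemplary h), ⟨1, ?_, rfl⟩⟩ ?_
    · show wordLength T ((1 : exemplary h) : ZwrZ) ≤ l
      rw [show ((1 : exemplary h) : ZwrZ) = 1 from rfl, wordLength_one]
      exact Nat.zero_le _
    · rintro N ⟨x, hx, rfl⟩
      have hxm : (x : ZwrZ) ∈ Subgroup.closure ({bZ, wPoly h} : Set ZwrZ) := x.2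
      -- G-side normal form
      have hrepT : Rep T (x : ZwrZ) (wordLength T (x : ZwrZ)) := rep_wordLength (hgenG _)
      obtain ⟨L, hL, hlen, hprod⟩ := hrepT
      obtain ⟨c, t, hpc, hSc, htc, hsuppc⟩ := word_form 1 _ letters_G L hL
      -- H-side normal form
      obtain ⟨n0, hrep0⟩ := exists_rep_of_mem_closure hxm
      have hrepS0 : Rep S x n0 := by
        have := rep_sub x.2 hrep0
        exact this
      set wlS : ℕ := wordLength S x with hwlS
      have hrepW : Rep S x wlS := rep_wordLength ⟨n0, hrepS0⟩
      have hrepG : Rep ({bZ, wPoly h} : Set ZwrZ) (x : ZwrZ) wlS := rep_coe hrepW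
      obtain ⟨L', hL', hlen', hprod'⟩ := hrepG
      obtain ⟨q, t₂, hpq, -, -, -⟩ := word_form Hc _ (letters_H h) L' hL'
      have heq : el ((1 : AddMonoidAlgebra ℤ ℤ) * c) t = el (Hc * q) t₂ := by
        rw [← hpc, ← hpq, hprod, hprod']
      obtain ⟨heq1, heq2⟩ := el_eq_el heq
      have hcq : (Hc * q : AddMonoidAlgebra ℤ ℤ) = c := by rw [← heq1, one_mul]
      -- bounds on c transfer to Hc * q
      have hSq : S1 (Hc * q : AddMonoidAlgebra ℤ ℤ) ≤ l := by
        rw [hcq]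
        calc S1 c ≤ L.length := hSc
          _ = wordLength T (x : ZwrZ) := hlen
          _ ≤ l := hx
      have hsuppq : ∀ m : ℤ, (Hc * q : AddMonoidAlgebra ℤ ℤ) m ≠ 0 → m.natAbs ≤ l := by
        intro m hm
        rw [hcq] at hm
        calc m.natAbs ≤ L.length := hsuppc m hm
          _ = wordLength T (x : ZwrZ) := hlen
          _ ≤ l := hx
      obtain ⟨f, hdegf, hShf, hSf, hsq⟩ := extract_poly h h0 q l hSq hsuppq
      have hqD : S1 q ≤ polyDistortion h (2 * l) := by
        rw [← hSf]
        exact le_polyDistortion h hh hdegf (by omega)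
      -- word in H
      have hsq' : ∀ m : ℤ, q m ≠ 0 → (-(l:ℤ)) ≤ m ∧ m ≤ (l:ℤ) := by
        intro m hm
        have := hsq m hm
        omega
      have hrepH := rep_el ({bZ, wPoly h} : Set ZwrZ) Hc (haH h) (hbH h) q t
        (-(l:ℤ)) ((l:ℤ)) (by omega) hsq'
      have hxel : (x : ZwrZ) = el (Hc * q) t := by
        rw [← hcq] at heq1
        rw [hprod'] at hpq   -- hpq : ↑x = el (Hc*q) t₂
        rw [hpq, ← heq2]
      rw [← hxel] at hrepH
      have hwl_le : wlS ≤ (l:ℤ).natAbs + ((l:ℤ) - (-(l:ℤ))).toNat + S1 q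
          + (t + (-(l:ℤ))).natAbs := by
        have := rep_sub x.2 hrepH
        exact wordLength_le_of_rep this
      have htabs : t.natAbs ≤ l := by
        calc t.natAbs ≤ L.length := htc
          _ = wordLength T (x : ZwrZ) := hlen
          _ ≤ l := hx
      have hwl5 : wlS ≤ 5 * l + S1 q := by
        have h1 : ((l:ℤ)).natAbs = l := Int.natAbs_natCast l
        have h2 : ((l:ℤ) - (-(l:ℤ))).toNat = 2 * l := by omega
        have h3 : (t + (-(l:ℤ))).natAbs ≤ 2 * l := by omega
        omega
      -- final estimates
      have hlin : l ≤ polyDistortion h (polyS h * l) := le_polyDistortion_linear h h0 l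
      have hShC : polyS h ≤ C := by rw [hC]; omega
      have h2C : 2 ≤ C := by rw [hC]; omega
      have hm1 : polyDistortion h (polyS h * l) ≤ polyDistortion h (C * l) :=
        polyDistortion_mono h hh (Nat.mul_le_mul_right l hShC)
      have hm2 : polyDistortion h (2 * l) ≤ polyDistortion h (C * l) :=
        polyDistortion_mono h hh (Nat.mul_le_mul_right l h2C)
      have h6C : 6 ≤ C := by rw [hC]; omega
      calc wlS ≤ 5 * l + S1 q := hwl5
        _ ≤ 5 * polyDistortion h (C * l) + polyDistortion h (C * l) := by omega
        _ = 6 * polyDistortion h (C * l) := by omega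
        _ ≤ C * polyDistortion h (C * l) := Nat.mul_le_mul_right _ h6C

end Main
/-- For `h ∈ ℤ[x]` with nonzero constant term, the distortion of the
polynomial `h` is equivalent to the distortion of the exemplary subgroup
`H = ⟨b, h(x)a⟩` in `ℤ wr ℤ` (with generating sets `{b, w}` of `H` and `{a, b}` of
`ℤ wr ℤ`). -/
theorem statement12 (h : Polynomial ℤ) (h0 : h.coeff 0 ≠ 0) :
    DistEquiv (polyDistortion h)
      (distortion {aZ, bZ} (exemplary h) (exemplaryGens h)) := by
  exact statement12' h h0

end DistortionPaper
end
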